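/- arXiv:2603.28531 — 10 statements merged into one kernel-verified Lean document; each statement's English description precedes it below -/
import Mathlib

section
/- Let s ∈ {1, −1}, c ∈ ℝ, Ω < 0 with s·(c + 4Ω) > 0. Then the functions U(ξ) = −12Ω·sech²(√(−Ω)·ξ) and A(ξ) = √(−12·s·Ω·(c + 4Ω))·sech(√(−Ω)·ξ) satisfy, for all ξ ∈ ℝ, the profile system U'' − c·U + (1/2)·U² + s·A² = 0 and A'' + (Ω + k·U)·A = 0 with coupling constant k = 1/6. -/
private lemma cosh_comp (b ξ : ℝ) :
    HasDerivAt (fun x => Real.cosh (b * x)) (b * Real.sinh (b * ξ)) ξ := by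
  simpa [mul_comm, Function.comp_def] using (Real.hasDerivAt_cosh (b * ξ)).comp ξ ((hasDerivAt_id ξ).const_mul b)

private lemma sinh_comp (b ξ : ℝ) :
    HasDerivAt (fun x => Real.sinh (b * x)) (b * Real.cosh (b * ξ)) ξ := by
  simpa [mul_comm, Function.comp_def] using (Real.hasDerivAt_sinh (b * ξ)).comp ξ ((hasDerivAt_id ξ).const_mul b)

private lemma hasDerivAt_U (K b ξ : ℝ) :
    HasDerivAt (fun x => K * (1 / Real.cosh (b * x)) ^ 2)
      (-2 * K * b * Real.sinh (b * ξ) / Real.cosh (b * ξ) ^ 3) ξ := by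
  have h := ((((cosh_comp b ξ).inv ((Real.cosh_pos _).ne')).pow 2).const_mul K)
  have hc := (Real.cosh_pos (b * ξ)).ne'
  simp only [one_div]
  refine h.congr_deriv ?_
  simp only [Pi.inv_apply, show (2:ℕ) - 1 = 1 from rfl, pow_one]
  field_simp
  ring

private lemma hasDerivAt_dU (K b ξ : ℝ) :
    HasDerivAt (fun x => -2 * K * b * Real.sinh (b * x) / Real.cosh (b * x) ^ 3)
      (-2 * K * b ^ 2 * (Real.cosh (b * ξ) ^ 2 - 3 * Real.sinh (b * ξ) ^ 2)
        / Real.cosh (b * ξ) ^ 4) ξ := by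
  have hnum : HasDerivAt (fun x => -2 * K * b * Real.sinh (b * x))
      (-2 * K * b * (b * Real.cosh (b * ξ))) ξ := (sinh_comp b ξ).const_mul _
  have hden : HasDerivAt (fun x => Real.cosh (b * x) ^ 3)
      (3 * Real.cosh (b * ξ) ^ 2 * (b * Real.sinh (b * ξ))) ξ := by
    exact ((cosh_comp b ξ).pow 3).congr_deriv (by norm_num)
  have h := hnum.div hden (by positivity)
  have hc := (Real.cosh_pos (b * ξ)).ne'
  refine h.congr_deriv ?_
  field_simp
  ring

private lemma hasDerivAt_A (a b ξ : ℝ) :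
    HasDerivAt (fun x => a * (1 / Real.cosh (b * x)))
      (-a * b * Real.sinh (b * ξ) / Real.cosh (b * ξ) ^ 2) ξ := by
  have h := (((cosh_comp b ξ).inv ((Real.cosh_pos _).ne')).const_mul a)
  have hc := (Real.cosh_pos (b * ξ)).ne'
  simp only [one_div]
  refine h.congr_deriv ?_
  field_simp

private lemma hasDerivAt_dA (a b ξ : ℝ) :
    HasDerivAt (fun x => -a * b * Real.sinh (b * x) / Real.cosh (b * x) ^ 2)
      (a * b ^ 2 * (2 * Real.sinh (b * ξ) ^ 2 - Real.cosh (b * ξ) ^ 2)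
        / Real.cosh (b * ξ) ^ 3) ξ := by
  have hnum : HasDerivAt (fun x => -a * b * Real.sinh (b * x))
      (-a * b * (b * Real.cosh (b * ξ))) ξ := (sinh_comp b ξ).const_mul _
  have hden : HasDerivAt (fun x => Real.cosh (b * x) ^ 2)
      (2 * Real.cosh (b * ξ) ^ 1 * (b * Real.sinh (b * ξ))) ξ := (cosh_comp b ξ).pow 2
  have h := hnum.div hden (by positivity)
  have hc := (Real.cosh_pos (b * ξ)).ne'
  refine h.congr_deriv ?_
  field_simp
  ring

/-- The exact coupled solitary wave `U(ξ) = −12Ω·sech²(√(−Ω)ξ)`,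
`A(ξ) = √(−12sΩ(c+4Ω))·sech(√(−Ω)ξ)` satisfies the profile system with
coupling constant `k = 1/6`. -/
theorem exact_coupled_soliton_k_one_sixth (s c Ω : ℝ)
    (hs : s = 1 ∨ s = -1) (hΩ : Ω < 0) (hpos : 0 < s * (c + 4 * Ω))
    (U A : ℝ → ℝ)
    (hU : U = fun ξ => -12 * Ω * (1 / Real.cosh (Real.sqrt (-Ω) * ξ)) ^ 2)
    (hA : A = fun ξ => Real.sqrt (-12 * s * Ω * (c + 4 * Ω)) *
      (1 / Real.cosh (Real.sqrt (-Ω) * ξ))) :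
    (∀ ξ : ℝ, deriv (deriv U) ξ - c * U ξ + (1 / 2) * U ξ ^ 2 + s * A ξ ^ 2 = 0) ∧
    (∀ ξ : ℝ, deriv (deriv A) ξ + (Ω + (1 / 6) * U ξ) * A ξ = 0) := by
  set b : ℝ := Real.sqrt (-Ω) with hb
  set a : ℝ := Real.sqrt (-12 * s * Ω * (c + 4 * Ω)) with ha
  have hb2 : b ^ 2 = -Ω := Real.sq_sqrt (by linarith)
  have ha2 : a ^ 2 = -12 * s * Ω * (c + 4 * Ω) := Real.sq_sqrt (by nlinarith)
  have hs2 : s ^ 2 = 1 := by rcases hs with h | h <;> simp [h]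
  have hdU : deriv U = fun ξ =>
      -2 * (-12 * Ω) * b * Real.sinh (b * ξ) / Real.cosh (b * ξ) ^ 3 := by
    funext ξ
    rw [hU]
    exact (hasDerivAt_U (-12 * Ω) b ξ).deriv
  have hdA : deriv A = fun ξ => -a * b * Real.sinh (b * ξ) / Real.cosh (b * ξ) ^ 2 := by
    funext ξ
    rw [hA]
    exact (hasDerivAt_A a b ξ).deriv
  constructor
  · intro ξ
    have hddU : deriv (deriv U) ξ =
        -2 * (-12 * Ω) * b ^ 2 * (Real.cosh (b * ξ) ^ 2 - 3 * Real.sinh (b * ξ) ^ 2)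
          / Real.cosh (b * ξ) ^ 4 := by
      rw [hdU]
      exact (hasDerivAt_dU (-12 * Ω) b ξ).deriv
    have hc := (Real.cosh_pos (b * ξ)).ne'
    have hsq := Real.cosh_sq (b * ξ)
    rw [hddU, hU, hA]
    have hsh : Real.sinh (b * ξ) ^ 2 = Real.cosh (b * ξ) ^ 2 - 1 := by linarith
    field_simp
    rw [hb2, ha2, hsh]
    linear_combination (-24 * Ω * (c + 4 * Ω) * Real.cosh (b * ξ) ^ 2) * hs2
  · intro ξ
    have hddA : deriv (deriv A) ξ =
        a * b ^ 2 * (2 * Real.sinh (b * ξ) ^ 2 - Real.cosh (b * ξ) ^ 2)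
          / Real.cosh (b * ξ) ^ 3 := by
      rw [hdA]
      exact (hasDerivAt_dA a b ξ).deriv
    have hc := (Real.cosh_pos (b * ξ)).ne'
    have hsq := Real.cosh_sq (b * ξ)
    rw [hddA, hU, hA]
    have hsh : Real.sinh (b * ξ) ^ 2 = Real.cosh (b * ξ) ^ 2 - 1 := by linarith
    field_simp
    rw [hb2, hsh]
    ring
end

section
/- Let s ∈ {1, −1}, c > 0, Ω < 0 with s·(c + 4Ω) > 0, and set k = −3Ω/(c − 2Ω). Then the functions U(ξ) = 2(c − 2Ω)·sech²(√(−Ω)·ξ) and A(ξ) = √(2·s·(c + 4Ω)·(c − 2Ω))·sech(√(−Ω)·ξ)·tanh(√(−Ω)·ξ) satisfy, for all ξ ∈ ℝ, the profile system U'' − c·U + (1/2)·U² + s·A² = 0 and A'' + (Ω + k·U)·A = 0. -/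
/-- The exact coupled solitary wave `U(ξ) = 2(c−2Ω)·sech²(√(−Ω)ξ)`,
`A(ξ) = √(2s(c+4Ω)(c−2Ω))·sech(√(−Ω)ξ)·tanh(√(−Ω)ξ)` satisfies the profile
system with coupling constant `k = −3Ω/(c−2Ω)`. -/
theorem exact_coupled_soliton_sign_indefinite (s c Ω k : ℝ)
    (hs : s = 1 ∨ s = -1) (hc : 0 < c) (hΩ : Ω < 0)
    (hpos : 0 < s * (c + 4 * Ω))
    (hk : k = -3 * Ω / (c - 2 * Ω))
    (U A : ℝ → ℝ)
    (hU : U = fun ξ => 2 * (c - 2 * Ω) * (1 / Real.cosh (Real.sqrt (-Ω) * ξ)) ^ 2)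
    (hA : A = fun ξ => Real.sqrt (2 * s * (c + 4 * Ω) * (c - 2 * Ω)) *
      (1 / Real.cosh (Real.sqrt (-Ω) * ξ)) * Real.tanh (Real.sqrt (-Ω) * ξ)) :
    (∀ ξ : ℝ, deriv (deriv U) ξ - c * U ξ + (1 / 2) * U ξ ^ 2 + s * A ξ ^ 2 = 0) ∧
    (∀ ξ : ℝ, deriv (deriv A) ξ + (Ω + k * U ξ) * A ξ = 0) := by
  have hdpos : 0 < c - 2 * Ω := by linarith
  have hd : c - 2 * Ω ≠ 0 := ne_of_gt hdpos
  set a : ℝ := Real.sqrt (-Ω) with ha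
  set K : ℝ := 2 * (c - 2 * Ω) with hK
  set L : ℝ := Real.sqrt (2 * s * (c + 4 * Ω) * (c - 2 * Ω)) with hL
  have ha2 : a ^ 2 = -Ω := Real.sq_sqrt (by linarith)
  have hLnn : 0 ≤ 2 * s * (c + 4 * Ω) * (c - 2 * Ω) := by nlinarith
  have hL2 : L ^ 2 = 2 * s * (c + 4 * Ω) * (c - 2 * Ω) := Real.sq_sqrt hLnn
  have hs2 : s ^ 2 = 1 := by rcases hs with h | h <;> rw [h] <;> norm_num
  have hX0 : ∀ x : ℝ, Real.cosh (a * x) ≠ 0 := fun x => (Real.cosh_pos (a * x)).ne'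
  have hch : ∀ ξ : ℝ, HasDerivAt (fun x => Real.cosh (a * x)) (a * Real.sinh (a * ξ)) ξ := by
    intro ξ
    simpa [mul_comm] using ((hasDerivAt_id ξ).const_mul a).cosh
  have hsh : ∀ ξ : ℝ, HasDerivAt (fun x => Real.sinh (a * x)) (a * Real.cosh (a * ξ)) ξ := by
    intro ξ
    simpa [mul_comm] using ((hasDerivAt_id ξ).const_mul a).sinh
  -- first derivative of U
  have hU1 : ∀ ξ : ℝ, HasDerivAt U
      (-2 * K * a * Real.sinh (a * ξ) / Real.cosh (a * ξ) ^ 3) ξ := by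
    intro ξ
    have h := (((hch ξ).inv (hX0 ξ)).pow 2).const_mul K
    rw [hU]
    have hfun : (fun ξ => 2 * (c - 2 * Ω) * (1 / Real.cosh (a * ξ)) ^ 2)
        = fun x => K * ((Real.cosh (a * x))⁻¹) ^ 2 := by
      funext x; rw [one_div, hK]
    rw [hfun]
    refine h.congr_deriv ?_
    simp only [Pi.inv_apply, Pi.pow_apply]
    have := hX0 ξ
    rw [show (2:ℕ) - 1 = 1 from rfl, pow_one]
    field_simp
    ring
  have hdU : deriv U = fun ξ => -2 * K * a * Real.sinh (a * ξ) / Real.cosh (a * ξ) ^ 3 :=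
    funext fun ξ => (hU1 ξ).deriv
  -- second derivative of U
  have hU2 : ∀ ξ : ℝ, HasDerivAt (deriv U)
      (-2 * K * a ^ 2 * (Real.cosh (a * ξ) ^ 2 - 3 * Real.sinh (a * ξ) ^ 2)
        / Real.cosh (a * ξ) ^ 4) ξ := by
    intro ξ
    rw [hdU]
    have h := (((hsh ξ).const_mul (-2 * K * a)).div ((hch ξ).pow 3)
      (pow_ne_zero 3 (hX0 ξ)))
    refine h.congr_deriv ?_
    simp only [Pi.inv_apply, Pi.pow_apply]
    field_simp
    ring
  -- rewrite A in sinh/cosh form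
  have hA2fun : A = fun x => L * (Real.sinh (a * x) / Real.cosh (a * x) ^ 2) := by
    rw [hA]
    funext x
    rw [Real.tanh_eq_sinh_div_cosh]
    ring
  -- first derivative of A
  have hA1 : ∀ ξ : ℝ, HasDerivAt A
      (L * a * (Real.cosh (a * ξ) ^ 2 - 2 * Real.sinh (a * ξ) ^ 2)
        / Real.cosh (a * ξ) ^ 3) ξ := by
    intro ξ
    rw [hA2fun]
    have h := ((hsh ξ).div ((hch ξ).pow 2) (pow_ne_zero 2 (hX0 ξ))).const_mul L
    refine h.congr_deriv ?_
    simp only [Pi.inv_apply, Pi.pow_apply]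
    field_simp
    ring
  have hdA : deriv A = fun ξ => L * a * (Real.cosh (a * ξ) ^ 2 - 2 * Real.sinh (a * ξ) ^ 2)
      / Real.cosh (a * ξ) ^ 3 :=
    funext fun ξ => (hA1 ξ).deriv
  -- second derivative of A
  have hA2 : ∀ ξ : ℝ, HasDerivAt (deriv A)
      (L * a ^ 2 * Real.sinh (a * ξ) * (6 * Real.sinh (a * ξ) ^ 2 - 5 * Real.cosh (a * ξ) ^ 2)
        / Real.cosh (a * ξ) ^ 4) ξ := by
    intro ξ
    rw [hdA]
    have hnum : HasDerivAt (fun x => L * a * (Real.cosh (a * x) ^ 2 - 2 * Real.sinh (a * x) ^ 2))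
        (L * a * (2 * Real.cosh (a * ξ) ^ 1 * (a * Real.sinh (a * ξ))
          - 2 * (2 * Real.sinh (a * ξ) ^ 1 * (a * Real.cosh (a * ξ))))) ξ :=
      (((hch ξ).pow 2).sub (((hsh ξ).pow 2).const_mul 2)).const_mul (L * a)
    have h := hnum.div ((hch ξ).pow 3) (pow_ne_zero 3 (hX0 ξ))
    refine h.congr_deriv ?_
    simp only [Pi.inv_apply, Pi.pow_apply]
    field_simp
    ring
  constructor
  · intro ξ
    rw [(hU2 ξ).deriv, hU, hA]
    simp only
    rw [Real.tanh_eq_sinh_div_cosh]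
    set X := Real.cosh (a * ξ) with hXdef
    set Y := Real.sinh (a * ξ) with hYdef
    have hX2 : X ^ 2 = Y ^ 2 + 1 := Real.cosh_sq (a * ξ)
    have hX : X ≠ 0 := hX0 ξ
    rw [hK]
    field_simp
    linear_combination (-4 * (c - 2 * Ω) * (X ^ 2 - 3 * Y ^ 2)) * ha2
      + (s * Y ^ 2) * hL2 + (2 * (c + 4 * Ω) * (c - 2 * Ω) * Y ^ 2) * hs2
      + (2 * (c - 2 * Ω) * (2 * Ω - c)) * hX2
  · intro ξ
    rw [(hA2 ξ).deriv, hU, hA2fun, hk]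
    simp only
    set X := Real.cosh (a * ξ) with hXdef
    set Y := Real.sinh (a * ξ) with hYdef
    have hX2 : X ^ 2 = Y ^ 2 + 1 := Real.cosh_sq (a * ξ)
    have hX : X ≠ 0 := hX0 ξ
    rw [hK]
    have hd' : c - Ω * 2 ≠ 0 := by intro h; apply hd; linarith
    field_simp
    linear_combination (1 : ℝ) * ((L * Y * (6 * Y ^ 2 - 5 * X ^ 2)) * ha2
      + (6 * Ω * L * Y) * hX2)
end

section
/- Let c, Ω, s ∈ ℝ and k ≠ 0, and let U, A : ℝ → ℝ be twice differentiable functions satisfying the profile system U'' − c·U + (1/2)·U² + s·A² = 0 and A'' + (Ω + k·U)·A = 0 on ℝ. Then the function H(ξ) = (1/2)·U'(ξ)² − (c/2)·U(ξ)² + (1/6)·U(ξ)³ + (s/k)·A'(ξ)² + s·U(ξ)·A(ξ)² + (Ω·s/k)·A(ξ)² is constant on ℝ. -/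
/-- The first invariant `H = U'²/2 − cU²/2 + U³/6 + (s/k)A'² + sUA² + (Ωs/k)A²`
is constant along solutions of the profile system. -/
theorem first_invariant_constant (c Ω s k : ℝ) (hk : k ≠ 0)
    (U A : ℝ → ℝ)
    (hU : Differentiable ℝ U) (hU' : Differentiable ℝ (deriv U))
    (hA : Differentiable ℝ A) (hA' : Differentiable ℝ (deriv A))
    (heq1 : ∀ ξ : ℝ, deriv (deriv U) ξ - c * U ξ + (1 / 2) * U ξ ^ 2 + s * A ξ ^ 2 = 0)
    (heq2 : ∀ ξ : ℝ, deriv (deriv A) ξ + (Ω + k * U ξ) * A ξ = 0) :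
    ∀ ξ₁ ξ₂ : ℝ,
      (1 / 2) * (deriv U ξ₁) ^ 2 - (c / 2) * U ξ₁ ^ 2 + (1 / 6) * U ξ₁ ^ 3
        + (s / k) * (deriv A ξ₁) ^ 2 + s * U ξ₁ * A ξ₁ ^ 2 + (Ω * s / k) * A ξ₁ ^ 2
      = (1 / 2) * (deriv U ξ₂) ^ 2 - (c / 2) * U ξ₂ ^ 2 + (1 / 6) * U ξ₂ ^ 3
        + (s / k) * (deriv A ξ₂) ^ 2 + s * U ξ₂ * A ξ₂ ^ 2 + (Ω * s / k) * A ξ₂ ^ 2 := by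
  set H : ℝ → ℝ := fun ξ =>
      (1 / 2) * (deriv U ξ) ^ 2 - (c / 2) * U ξ ^ 2 + (1 / 6) * U ξ ^ 3
        + (s / k) * (deriv A ξ) ^ 2 + s * U ξ * A ξ ^ 2 + (Ω * s / k) * A ξ ^ 2 with hH
  have key : ∀ ξ : ℝ, HasDerivAt H 0 ξ := by
    intro ξ
    have hu := (hU ξ).hasDerivAt
    have hu' := (hU' ξ).hasDerivAt
    have ha := (hA ξ).hasDerivAt
    have ha' := (hA' ξ).hasDerivAt
    have h1 : deriv (deriv U) ξ = c * U ξ - (1 / 2) * U ξ ^ 2 - s * A ξ ^ 2 := by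
      have := heq1 ξ; linarith
    have h2 : deriv (deriv A) ξ = -(Ω + k * U ξ) * A ξ := by
      have := heq2 ξ; linarith
    have hcomb := ((((((hu'.pow 2).const_mul (1 / 2 : ℝ)).sub
        ((hu.pow 2).const_mul (c / 2))).add
        ((hu.pow 3).const_mul (1 / 6))).add
        ((ha'.pow 2).const_mul (s / k))).add
        ((hu.const_mul s).mul (ha.pow 2))).add
        ((ha.pow 2).const_mul (Ω * s / k))
    convert hcomb using 1
    case e'_4 => rfl
    case e'_5 => rfl
    case e'_8 => rfl
    rw [h1, h2]
    rw [Pi.pow_apply]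
    push_cast
    field_simp
    ring
  intro ξ₁ ξ₂
  exact is_const_of_deriv_eq_zero (fun x => (key x).differentiableAt)
    (fun x => (key x).deriv) ξ₁ ξ₂
end

section
/- Let c, Ω, s ∈ ℝ and k = 1/6, and let U, A : ℝ → ℝ be twice differentiable functions satisfying the profile system U'' − c·U + (1/2)·U² + s·A² = 0 and A'' + (Ω + (1/6)·U)·A = 0 on ℝ. Then the function I(ξ) = A·A'·U' − U·(A')² + A²·(Ω·U + (1/12)·U² + (s/4)·A²) + 3·(c + 4Ω)·((A')² + Ω·A²) is constant on ℝ. -/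
/-- For `k = 1/6`, the second invariant
`I = AA'U' − U(A')² + A²(ΩU + U²/12 + sA²/4) + 3(c+4Ω)((A')² + ΩA²)`
is constant along solutions of the profile system. -/
theorem second_invariant_constant_k_one_sixth (c Ω s : ℝ)
    (U A : ℝ → ℝ)
    (hU : Differentiable ℝ U) (hU' : Differentiable ℝ (deriv U))
    (hA : Differentiable ℝ A) (hA' : Differentiable ℝ (deriv A))
    (heq1 : ∀ ξ : ℝ, deriv (deriv U) ξ - c * U ξ + (1 / 2) * U ξ ^ 2 + s * A ξ ^ 2 = 0)
    (heq2 : ∀ ξ : ℝ, deriv (deriv A) ξ + (Ω + (1 / 6) * U ξ) * A ξ = 0) :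
    ∀ ξ₁ ξ₂ : ℝ,
      A ξ₁ * deriv A ξ₁ * deriv U ξ₁ - U ξ₁ * (deriv A ξ₁) ^ 2
        + A ξ₁ ^ 2 * (Ω * U ξ₁ + (1 / 12) * U ξ₁ ^ 2 + (s / 4) * A ξ₁ ^ 2)
        + 3 * (c + 4 * Ω) * ((deriv A ξ₁) ^ 2 + Ω * A ξ₁ ^ 2)
      = A ξ₂ * deriv A ξ₂ * deriv U ξ₂ - U ξ₂ * (deriv A ξ₂) ^ 2
        + A ξ₂ ^ 2 * (Ω * U ξ₂ + (1 / 12) * U ξ₂ ^ 2 + (s / 4) * A ξ₂ ^ 2)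
        + 3 * (c + 4 * Ω) * ((deriv A ξ₂) ^ 2 + Ω * A ξ₂ ^ 2) := by
  set I : ℝ → ℝ := fun ξ =>
    A ξ * deriv A ξ * deriv U ξ - U ξ * (deriv A ξ) ^ 2
      + A ξ ^ 2 * (Ω * U ξ + (1 / 12) * U ξ ^ 2 + (s / 4) * A ξ ^ 2)
      + 3 * (c + 4 * Ω) * ((deriv A ξ) ^ 2 + Ω * A ξ ^ 2) with hI
  have key : ∀ ξ, HasDerivAt I 0 ξ := by
    intro ξ
    have hAx := (hA ξ).hasDerivAt
    have hA'x := (hA' ξ).hasDerivAt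
    have hUx := (hU ξ).hasDerivAt
    have hU'x := (hU' ξ).hasDerivAt
    have h : HasDerivAt I
        (deriv A ξ * deriv A ξ * deriv U ξ + A ξ * deriv (deriv A) ξ * deriv U ξ
          + A ξ * deriv A ξ * deriv (deriv U) ξ
          - (deriv U ξ * (deriv A ξ) ^ 2 + U ξ * (2 * deriv A ξ * deriv (deriv A) ξ))
          + (2 * A ξ * deriv A ξ * (Ω * U ξ + (1 / 12) * U ξ ^ 2 + (s / 4) * A ξ ^ 2)
            + A ξ ^ 2 * (Ω * deriv U ξ + (1 / 12) * (2 * U ξ * deriv U ξ)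
              + (s / 4) * (2 * A ξ * deriv A ξ)))
          + 3 * (c + 4 * Ω) * (2 * deriv A ξ * deriv (deriv A) ξ
            + Ω * (2 * A ξ * deriv A ξ))) ξ := by
      have h1 : HasDerivAt (fun ξ => A ξ * deriv A ξ * deriv U ξ)
          ((deriv A ξ * deriv A ξ + A ξ * deriv (deriv A) ξ) * deriv U ξ
            + A ξ * deriv A ξ * deriv (deriv U) ξ) ξ := (hAx.mul hA'x).mul hU'x
      have h2 : HasDerivAt (fun ξ => U ξ * (deriv A ξ) ^ 2)
          (deriv U ξ * (deriv A ξ) ^ 2 + U ξ * (2 * (deriv A ξ) ^ 1 * deriv (deriv A) ξ)) ξ :=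
        hUx.mul (hA'x.pow 2)
      have h3 : HasDerivAt (fun ξ => A ξ ^ 2 * (Ω * U ξ + (1 / 12) * U ξ ^ 2 + (s / 4) * A ξ ^ 2))
          (2 * A ξ ^ 1 * deriv A ξ * (Ω * U ξ + (1 / 12) * U ξ ^ 2 + (s / 4) * A ξ ^ 2)
            + A ξ ^ 2 * (Ω * deriv U ξ + (1 / 12) * (2 * U ξ ^ 1 * deriv U ξ)
              + (s / 4) * (2 * A ξ ^ 1 * deriv A ξ))) ξ :=
        (hAx.pow 2).mul (((hUx.const_mul Ω).add ((hUx.pow 2).const_mul (1/12))).add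
          ((hAx.pow 2).const_mul (s/4)))
      have h4 : HasDerivAt (fun ξ => 3 * (c + 4 * Ω) * ((deriv A ξ) ^ 2 + Ω * A ξ ^ 2))
          (3 * (c + 4 * Ω) * (2 * (deriv A ξ) ^ 1 * deriv (deriv A) ξ
            + Ω * (2 * A ξ ^ 1 * deriv A ξ))) ξ :=
        (((hA'x.pow 2).add ((hAx.pow 2).const_mul Ω)).const_mul (3 * (c + 4 * Ω)))
      have := ((h1.sub h2).add h3).add h4
      convert this using 1
      · rfl
      · rfl
      · rfl
      ring
    convert h using 1
    have e1 := heq1 ξ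
    have e2 := heq2 ξ
    linear_combination (-(A ξ * deriv A ξ)) * e1
      - (A ξ * deriv U ξ - 2 * U ξ * deriv A ξ + 6 * (c + 4 * Ω) * deriv A ξ) * e2
  intro ξ₁ ξ₂
  have : I ξ₁ = I ξ₂ := by
    have hconst := is_const_of_deriv_eq_zero (f := I)
      (fun x => (key x).differentiableAt) (fun x => (key x).deriv) ξ₁ ξ₂
    exact hconst
  simpa [hI] using this
end

section
/- Let c, s ∈ ℝ, k = 1 and Ω = −c, and let U, A : ℝ → ℝ be twice differentiable functions satisfying the profile system U'' − c·U + (1/2)·U² + s·A² = 0 and A'' + (−c + U)·A = 0 on ℝ. Then the function I(ξ) = A'(ξ)·U'(ξ) − c·A(ξ)·U(ξ) + (s/3)·A(ξ)³ + (1/2)·A(ξ)·U(ξ)² is constant on ℝ. -/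
/-- For `k = 1` and `Ω = −c`, the second invariant
`I = A'U' − cAU + (s/3)A³ + (1/2)AU²` is constant along solutions of the
profile system. -/
theorem second_invariant_constant_k_one (c s : ℝ)
    (U A : ℝ → ℝ)
    (hU : Differentiable ℝ U) (hU' : Differentiable ℝ (deriv U))
    (hA : Differentiable ℝ A) (hA' : Differentiable ℝ (deriv A))
    (heq1 : ∀ ξ : ℝ, deriv (deriv U) ξ - c * U ξ + (1 / 2) * U ξ ^ 2 + s * A ξ ^ 2 = 0)
    (heq2 : ∀ ξ : ℝ, deriv (deriv A) ξ + (-c + U ξ) * A ξ = 0) :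
    ∀ ξ₁ ξ₂ : ℝ,
      deriv A ξ₁ * deriv U ξ₁ - c * A ξ₁ * U ξ₁ + (s / 3) * A ξ₁ ^ 3
        + (1 / 2) * A ξ₁ * U ξ₁ ^ 2
      = deriv A ξ₂ * deriv U ξ₂ - c * A ξ₂ * U ξ₂ + (s / 3) * A ξ₂ ^ 3
        + (1 / 2) * A ξ₂ * U ξ₂ ^ 2 := by
  set I : ℝ → ℝ := fun ξ =>
    deriv A ξ * deriv U ξ - c * A ξ * U ξ + (s / 3) * A ξ ^ 3
      + (1 / 2) * A ξ * U ξ ^ 2 with hI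
  have key : ∀ ξ : ℝ, HasDerivAt I 0 ξ := by
    intro ξ
    have hdU : HasDerivAt U (deriv U ξ) ξ := (hU ξ).hasDerivAt
    have hdA : HasDerivAt A (deriv A ξ) ξ := (hA ξ).hasDerivAt
    have hdU' : HasDerivAt (deriv U) (deriv (deriv U) ξ) ξ := (hU' ξ).hasDerivAt
    have hdA' : HasDerivAt (deriv A) (deriv (deriv A) ξ) ξ := (hA' ξ).hasDerivAt
    have h : HasDerivAt I
        ((deriv (deriv A) ξ * deriv U ξ + deriv A ξ * deriv (deriv U) ξ)
          - c * (deriv A ξ * U ξ + A ξ * deriv U ξ)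
          + (s / 3) * (3 * A ξ ^ 2 * deriv A ξ)
          + (1 / 2) * (deriv A ξ * U ξ ^ 2 + A ξ * (2 * U ξ * deriv U ξ))) ξ := by
      have h1 := hdA'.mul hdU'
      have h2 := (hdA.mul hdU).const_mul c
      have h3 := ((hdA.pow 3).const_mul (s / 3))
      have h4 := (hdA.mul (hdU.pow 2)).const_mul (1 / 2)
      have h5 := ((h1.sub h2).add h3).add h4
      have hfun : I = fun x => deriv A x * deriv U x - c * (A x * U x)
          + s / 3 * A x ^ 3 + 1 / 2 * (A x * U x ^ 2) := by
        funext x; rw [hI]; ring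
      rw [hfun]
      convert h5 using 1
      · rfl
      · rfl
      · funext x; simp only [Pi.add_apply, Pi.sub_apply, Pi.mul_apply, Pi.pow_apply]
      · simp only [Pi.pow_apply]
        push_cast
        ring
    have e1 := heq1 ξ
    have e2 := heq2 ξ
    have : (deriv (deriv A) ξ * deriv U ξ + deriv A ξ * deriv (deriv U) ξ)
          - c * (deriv A ξ * U ξ + A ξ * deriv U ξ)
          + (s / 3) * (3 * A ξ ^ 2 * deriv A ξ)
          + (1 / 2) * (deriv A ξ * U ξ ^ 2 + A ξ * (2 * U ξ * deriv U ξ)) = 0 := by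
      have hU2 : deriv (deriv U) ξ = c * U ξ - (1 / 2) * U ξ ^ 2 - s * A ξ ^ 2 := by
        linarith
      have hA2 : deriv (deriv A) ξ = (c - U ξ) * A ξ := by linarith [e2]; 
      rw [hU2, hA2]; ring
    rw [this] at h
    exact h
  intro ξ₁ ξ₂
  have : ∀ x y : ℝ, I x = I y :=
    is_const_of_deriv_eq_zero (fun x => (key x).differentiableAt)
      (fun x => (key x).deriv)
  exact this ξ₁ ξ₂
end

section
/- Let c > 0 and k > 1/6. Set q = (√(1 + 48k) − 3)/2, Ω̃_c = −(c/16)·(√(1 + 48k) − 3)², and U₀(ξ) = 3c·sech²(√c·ξ/2). Then the function g̃(ξ) = sech^q(√c·ξ/2)·tanh(√c·ξ/2) satisfies g̃''(ξ) + (Ω̃_c + k·U₀(ξ))·g̃(ξ) = 0 for all ξ ∈ ℝ. -/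
/-- The excited-state eigenfunction `g̃(ξ) = sech^q(√c·ξ/2)·tanh(√c·ξ/2)` with
`q = (√(1+48k) − 3)/2` satisfies `g̃'' + (Ω̃_c + kU₀)g̃ = 0` at the second
bifurcation point `Ω̃_c = −(c/16)(√(1+48k) − 3)²`, for `k > 1/6`. -/
theorem excited_state_eigenfunction (c k : ℝ) (hc : 0 < c) (hk : 1 / 6 < k)
    (q Ωc : ℝ)
    (hq : q = (Real.sqrt (1 + 48 * k) - 3) / 2)
    (hΩc : Ωc = -(c / 16) * (Real.sqrt (1 + 48 * k) - 3) ^ 2)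
    (U₀ g : ℝ → ℝ)
    (hU₀ : U₀ = fun ξ => 3 * c * (1 / Real.cosh (Real.sqrt c * ξ / 2)) ^ 2)
    (hg : g = fun ξ => (1 / Real.cosh (Real.sqrt c * ξ / 2)) ^ q *
      Real.tanh (Real.sqrt c * ξ / 2)) :
    ∀ ξ : ℝ, deriv (deriv g) ξ + (Ωc + k * U₀ ξ) * g ξ = 0 := by
  have hD0 : (0:ℝ) ≤ 1 + 48 * k := by nlinarith
  have hD : Real.sqrt (1 + 48 * k) ^ 2 = 1 + 48 * k := Real.sq_sqrt hD0
  set a : ℝ := Real.sqrt c / 2 with ha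
  have ha2 : a ^ 2 = c / 4 := by
    rw [ha, div_pow, Real.sq_sqrt hc.le]; norm_num
  have hax : ∀ x : ℝ, Real.sqrt c * x / 2 = a * x := fun x => by rw [ha]; ring
  have hcpos : ∀ x : ℝ, (0:ℝ) < Real.cosh x := fun x => Real.cosh_pos x
  have hsq : ∀ x : ℝ, Real.cosh x ^ (2:ℝ) = Real.cosh x ^ (2:ℕ) := fun x => by
    rw [show (2:ℝ) = ((2:ℕ):ℝ) by norm_num, Real.rpow_natCast]
  -- rewrite g in a convenient form
  have hgf : g = fun x => Real.sinh (a * x) * Real.cosh (a * x) ^ (-(q+1)) := by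
    funext x
    rw [hg]
    simp only [hax x]
    have h1 : (1 / Real.cosh (a*x)) ^ q = Real.cosh (a*x) ^ (-q) := by
      rw [one_div, Real.inv_rpow (hcpos (a*x)).le, Real.rpow_neg (hcpos (a*x)).le]
    have h2 : Real.cosh (a*x) ^ (-(q+1)) = Real.cosh (a*x) ^ (-q) / Real.cosh (a*x) := by
      rw [show -(q+1) = -q - 1 by ring, Real.rpow_sub (hcpos _), Real.rpow_one]
    rw [h1, Real.tanh_eq_sinh_div_cosh, h2]
    ring
  -- first derivative of the model function
  have key1 : ∀ x : ℝ, HasDerivAt (fun y => Real.sinh y * Real.cosh y ^ (-(q+1)))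
      (-q * Real.cosh x ^ (-q) + (q+1) * Real.cosh x ^ (-(q+2))) x := by
    intro x
    have hC0 : Real.cosh x ≠ 0 := (hcpos x).ne'
    have d1 : HasDerivAt (fun y => Real.cosh y ^ (-(q+1)))
        (Real.sinh x * (-(q+1)) * Real.cosh x ^ (-(q+1) - 1)) x :=
      (Real.hasDerivAt_cosh x).rpow_const (Or.inl hC0)
    have d2 := (Real.hasDerivAt_sinh x).mul d1
    refine d2.congr_deriv ?_
    symm
    have hS : Real.sinh x ^ 2 = Real.cosh x ^ 2 - 1 := by
      linarith [Real.cosh_sq' x]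
    have e1 : Real.cosh x ^ (-(q+1) - 1) = Real.cosh x ^ (-(q+2)) := by
      rw [show -(q+1) - 1 = -(q+2) by ring]
    have e2 : Real.cosh x ^ (-q) = Real.cosh x ^ (-(q+2)) * Real.cosh x ^ (2:ℕ) := by
      rw [show -q = -(q+2) + (2:ℝ) by ring, Real.rpow_add (hcpos x), hsq x]
    have e3 : Real.cosh x ^ (-(q+1)) = Real.cosh x ^ (-(q+2)) * Real.cosh x := by
      rw [show -(q+1) = -(q+2) + (1:ℝ) by ring, Real.rpow_add (hcpos x), Real.rpow_one]
    rw [e1, e2, e3]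
    linear_combination ((q+1) * Real.cosh x ^ (-(q+2))) * hS
  -- second derivative
  have key2 : ∀ x : ℝ, HasDerivAt
      (fun y => -q * Real.cosh y ^ (-q) + (q+1) * Real.cosh y ^ (-(q+2)))
      (q^2 * Real.sinh x * Real.cosh x ^ (-(q+1))
        - (q+1)*(q+2) * Real.sinh x * Real.cosh x ^ (-(q+3))) x := by
    intro x
    have hC0 : Real.cosh x ≠ 0 := (hcpos x).ne'
    have d1 : HasDerivAt (fun y => Real.cosh y ^ (-q))
        (Real.sinh x * (-q) * Real.cosh x ^ (-q - 1)) x :=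
      (Real.hasDerivAt_cosh x).rpow_const (Or.inl hC0)
    have d2 : HasDerivAt (fun y => Real.cosh y ^ (-(q+2)))
        (Real.sinh x * (-(q+2)) * Real.cosh x ^ (-(q+2) - 1)) x :=
      (Real.hasDerivAt_cosh x).rpow_const (Or.inl hC0)
    have d3 := (d1.const_mul (-q)).add (d2.const_mul (q+1))
    refine d3.congr_deriv ?_
    symm
    rw [show -q - 1 = -(q+1) by ring, show -(q+2) - 1 = -(q+3) by ring]
    ring
  -- derivative of g
  have hgd : ∀ x : ℝ, HasDerivAt g
      (a * (-q * Real.cosh (a*x) ^ (-q) + (q+1) * Real.cosh (a*x) ^ (-(q+2)))) x := by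
    intro x
    have hinner : HasDerivAt (fun y : ℝ => a * y) a x := by
      simpa using (hasDerivAt_id x).const_mul a
    have := (key1 (a*x)).comp x hinner
    rw [hgf]
    refine this.congr_deriv ?_
    symm
    ring
  have hderiv_g : deriv g = fun x =>
      a * (-q * Real.cosh (a*x) ^ (-q) + (q+1) * Real.cosh (a*x) ^ (-(q+2))) := by
    funext x; exact (hgd x).deriv
  intro ξ
  have hinner : HasDerivAt (fun y : ℝ => a * y) a ξ := by
    simpa using (hasDerivAt_id ξ).const_mul a
  have hgd2 : HasDerivAt (deriv g)
      ((q^2 * Real.sinh (a*ξ) * Real.cosh (a*ξ) ^ (-(q+1))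
        - (q+1)*(q+2) * Real.sinh (a*ξ) * Real.cosh (a*ξ) ^ (-(q+3))) * a * a) ξ := by
    rw [hderiv_g]
    have := ((key2 (a*ξ)).comp ξ hinner).const_mul a
    refine this.congr_deriv ?_
    symm
    ring
  rw [hgd2.deriv]
  simp only [hgf, hU₀, hax ξ]
  have hC0 : Real.cosh (a*ξ) ≠ 0 := (hcpos _).ne'
  have e3 : Real.cosh (a*ξ) ^ (-(q+3))
      = Real.cosh (a*ξ) ^ (-(q+1)) / Real.cosh (a*ξ) ^ (2:ℕ) := by
    rw [show -(q+3) = -(q+1) - (2:ℝ) by ring, Real.rpow_sub (hcpos _), hsq]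
  have h12 : (q+1)*(q+2) = 12 * k := by
    linear_combination (q + (Real.sqrt (1+48*k)+3)/2) * hq + hD/4
  have hΩ : Ωc = -(c/4) * q^2 := by
    linear_combination hΩc + (c/4)*(q + (Real.sqrt (1+48*k)-3)/2) * hq
  have haa : a * a = c / 4 := by rw [← sq]; exact ha2
  rw [e3, hΩ]
  set C := Real.cosh (a*ξ)
  set S := Real.sinh (a*ξ)
  set E := C ^ (-(q+1)) with hE
  clear_value a C S E
  field_simp
  linear_combination (4*S*E*C^2*(q^2*C^2 - (q+1)*(q+2))) * ha2 - c*S*E*C^2 * h12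
    + (S*E*(12*q*C^2 - 12*q + 8*q^2*C^2 - 4*q^2*C^4 - 4*q^2 + 8*C^2 - 8)) * ha2
    + S*E*c*(C^2-1) * h12
end

section
/- The function W(y) = (1/4)·(y·tanh y − 1)·sech²y satisfies −W''(y) + 4·W(y) − 12·sech²(y)·W(y) = sech²(y) for all y ∈ ℝ, and moreover ∫_ℝ sech²(y)·W(y) dy = −1/4. -/
open MeasureTheory Real Filter


noncomputable def W1 : ℝ → ℝ := fun y =>
  (3*Real.sinh y/Real.cosh y^3 + 3*y/Real.cosh y^4 - 2*y/Real.cosh y^2)/4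
noncomputable def W2 : ℝ → ℝ := fun y =>
  -2/Real.cosh y^2 + 3/Real.cosh y^4 - 3*y*Real.sinh y/Real.cosh y^5 + y*Real.sinh y/Real.cosh y^3

lemma hasDerivAt_tanh (x : ℝ) : HasDerivAt Real.tanh (1/Real.cosh x^2) x := by
  have hc := (Real.cosh_pos x).ne'
  have h := (Real.hasDerivAt_sinh x).div (Real.hasDerivAt_cosh x) hc
  have : Real.tanh = fun y => Real.sinh y / Real.cosh y := funext fun y => Real.tanh_eq_sinh_div_cosh y
  rw [this]
  refine h.congr_deriv ?_
  have hs := Real.cosh_sq_sub_sinh_sq x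
  field_simp
  nlinarith [hs]

lemma hasDerivAt_W (y : ℝ) :
    HasDerivAt (fun y => (1 / 4) * (y * Real.tanh y - 1) * (1 / Real.cosh y) ^ 2) (W1 y) y := by
  have hc := (Real.cosh_pos y).ne'
  have hA : HasDerivAt (fun y : ℝ => (1/4) * (y * Real.tanh y - 1))
      ((1/4) * (1 * Real.tanh y + y * (1/Real.cosh y^2))) y :=
    (((hasDerivAt_id y).mul (hasDerivAt_tanh y)).sub_const 1).const_mul (1/4)
  have hB : HasDerivAt (fun y : ℝ => (1 / Real.cosh y) ^ 2)
      (2 * (1/Real.cosh y) ^ 1 * (-(Real.sinh y) / Real.cosh y ^ 2)) y := by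
    have h1 : HasDerivAt (fun y : ℝ => 1 / Real.cosh y) (-(Real.sinh y) / Real.cosh y ^ 2) y := by
      simpa using (hasDerivAt_const y (1:ℝ)).fun_div (Real.hasDerivAt_cosh y) hc
    exact h1.pow 2
  have h := hA.mul hB
  refine h.congr_deriv ?_
  have hs := Real.cosh_sq_sub_sinh_sq y
  rw [Real.tanh_eq_sinh_div_cosh]
  simp only [W1]
  field_simp
  ring_nf
  rw [show Real.sinh y^2 = Real.cosh y^2 - 1 by nlinarith [hs]]
  ring

lemma hasDerivAt_W1 (y : ℝ) : HasDerivAt W1 (W2 y) y := by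
  have hc := (Real.cosh_pos y).ne'
  have hc2 : HasDerivAt (fun y : ℝ => Real.cosh y ^ 2) ((2:ℝ)*Real.cosh y^1*Real.sinh y) y := by
    have := (Real.hasDerivAt_cosh y).pow 2; norm_num at this ⊢; exact this
  have hc3 : HasDerivAt (fun y : ℝ => Real.cosh y ^ 3) ((3:ℝ)*Real.cosh y^2*Real.sinh y) y := by
    have := (Real.hasDerivAt_cosh y).pow 3; norm_num at this ⊢; exact this
  have hc4 : HasDerivAt (fun y : ℝ => Real.cosh y ^ 4) ((4:ℝ)*Real.cosh y^3*Real.sinh y) y := by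
    have := (Real.hasDerivAt_cosh y).pow 4; norm_num at this ⊢; exact this
  have h1 : HasDerivAt (fun y : ℝ => 3*Real.sinh y/Real.cosh y^3)
      ((3*Real.cosh y * Real.cosh y^3 - 3*Real.sinh y*(3*Real.cosh y^2*Real.sinh y))/(Real.cosh y^3)^2) y :=
    ((Real.hasDerivAt_sinh y).const_mul 3).div hc3 (pow_ne_zero _ hc)
  have h2 : HasDerivAt (fun y : ℝ => 3*y/Real.cosh y^4)
      ((3*Real.cosh y^4 - 3*y*(4*Real.cosh y^3*Real.sinh y))/(Real.cosh y^4)^2) y :=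
    by simpa using ((hasDerivAt_id y).const_mul 3).fun_div hc4 (pow_ne_zero _ hc)
  have h3 : HasDerivAt (fun y : ℝ => 2*y/Real.cosh y^2)
      ((2*Real.cosh y^2 - 2*y*(2*Real.cosh y^1*Real.sinh y))/(Real.cosh y^2)^2) y :=
    by simpa using ((hasDerivAt_id y).const_mul 2).fun_div hc2 (pow_ne_zero _ hc)
  have h := ((h1.add h2).sub h3).div_const 4
  refine h.congr_deriv ?_
  have hs := Real.cosh_sq_sub_sinh_sq y
  simp only [W2]
  field_simp
  ring_nf
  rw [show Real.sinh y^2 = Real.cosh y^2 - 1 by nlinarith [hs]]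
  ring

noncomputable def Ffun : ℝ → ℝ := fun y =>
  -(y/Real.cosh y^4)/16 - 3/16*Real.tanh y + 1/16*Real.tanh y^3

lemma hasDerivAt_F (y : ℝ) : HasDerivAt Ffun
    ((1 / Real.cosh y) ^ 2 * ((1 / 4) * (y * Real.tanh y - 1) * (1 / Real.cosh y) ^ 2)) y := by
  have hc := (Real.cosh_pos y).ne'
  have hc4 : HasDerivAt (fun y : ℝ => Real.cosh y ^ 4) ((4:ℝ)*Real.cosh y^3*Real.sinh y) y := by
    have := (Real.hasDerivAt_cosh y).pow 4; norm_num at this ⊢; exact this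
  have h1 : HasDerivAt (fun y : ℝ => -(y/Real.cosh y^4)/16)
      (-((Real.cosh y^4 - y*(4*Real.cosh y^3*Real.sinh y))/(Real.cosh y^4)^2)/16) y := by
    have := ((hasDerivAt_id y).div hc4 (pow_ne_zero _ hc)).neg.div_const 16
    simpa using this
  have h2 : HasDerivAt (fun y : ℝ => 3/16*Real.tanh y) (3/16*(1/Real.cosh y^2)) y :=
    (hasDerivAt_tanh y).const_mul (3/16)
  have h3 : HasDerivAt (fun y : ℝ => 1/16*Real.tanh y^3)
      (1/16*((3:ℕ)*Real.tanh y^2*(1/Real.cosh y^2))) y :=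
    ((hasDerivAt_tanh y).pow 3).const_mul (1/16)
  have h := (h1.sub h2).add h3
  refine h.congr_deriv ?_
  have hs := Real.cosh_sq_sub_sinh_sq y
  rw [Real.tanh_eq_sinh_div_cosh]
  push_cast
  field_simp
  ring_nf
  rw [show Real.sinh y^2 = Real.cosh y^2 - 1 by nlinarith [hs]]
  ring

lemma tanh_eq_exp (y : ℝ) :
    Real.tanh y = (1 - Real.exp (-2*y))/(1 + Real.exp (-2*y)) := by
  have h1 : Real.exp (-y) = Real.exp y * Real.exp (-2*y) := by
    rw [← Real.exp_add]; ring_nf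
  have h2 := Real.exp_pos y
  have h3 := Real.exp_pos (-2*y)
  have h4 := Real.exp_pos (-y)
  rw [Real.tanh_eq_sinh_div_cosh, Real.sinh_eq, Real.cosh_eq, h1]
  rw [div_eq_div_iff (by positivity) (by positivity)]
  ring

lemma tanh_top : Filter.Tendsto Real.tanh atTop (nhds 1) := by
  have hexp : Filter.Tendsto (fun y : ℝ => Real.exp (-2*y)) atTop (nhds 0) := by
    have h0 : Filter.Tendsto (fun y : ℝ => (-2)*y) atTop atBot :=
      tendsto_id.const_mul_atTop_of_neg (by norm_num : (-2:ℝ) < 0)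
    exact (Real.tendsto_exp_atBot.comp h0).congr (fun y => by norm_num)
  have hnum : Filter.Tendsto (fun y : ℝ => 1 - Real.exp (-2*y)) atTop (nhds 1) := by
    simpa using tendsto_const_nhds.sub hexp
  have hden : Filter.Tendsto (fun y : ℝ => 1 + Real.exp (-2*y)) atTop (nhds 1) := by
    simpa using tendsto_const_nhds.add hexp
  have h := hnum.div hden one_ne_zero
  simp only [div_one] at h
  exact (h.congr (fun y => (tanh_eq_exp y).symm))

lemma tanh_bot : Filter.Tendsto Real.tanh atBot (nhds (-1)) := by
  have h := (tanh_top.comp tendsto_neg_atBot_atTop).neg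
  simp only [Function.comp] at h
  have : ∀ y : ℝ, -Real.tanh (-y) = Real.tanh y := fun y => by rw [Real.tanh_neg]; ring
  exact (h.congr this)

lemma ycosh_top : Filter.Tendsto (fun y : ℝ => y/Real.cosh y^4) atTop (nhds 0) := by
  have hg : Filter.Tendsto (fun y : ℝ => 16*(y^1*Real.exp (-y))) atTop (nhds 0) := by
    have := (Real.tendsto_pow_mul_exp_neg_atTop_nhds_zero 1).const_mul (16:ℝ)
    simpa using this
  apply squeeze_zero' ?_ ?_ hg
  · filter_upwards [Filter.eventually_ge_atTop (0:ℝ)] with y hy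
    positivity
  · filter_upwards [Filter.eventually_ge_atTop (0:ℝ)] with y hy
    have hc := Real.cosh_pos y
    have h1 : Real.exp y / 16 ≤ Real.cosh y ^ 4 := by
      have he1 : (1:ℝ) ≤ Real.exp y := Real.one_le_exp hy
      have h2 : Real.exp y / 2 ≤ Real.cosh y := by
        rw [Real.cosh_eq]; have := Real.exp_pos (-y); linarith
      have h4 : (Real.exp y/2)^4 ≤ Real.cosh y^4 := pow_le_pow_left₀ (by positivity) h2 4
      have h5 : Real.exp y ≤ Real.exp y^4 := le_self_pow₀ (by linarith) (by norm_num)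
      nlinarith [h4, h5]
    calc y / Real.cosh y ^ 4 ≤ y / (Real.exp y / 16) := by
          apply div_le_div_of_nonneg_left hy (by positivity) h1
      _ = 16*(y^1*Real.exp (-y)) := by
          rw [Real.exp_neg]; field_simp

lemma ycosh_bot : Filter.Tendsto (fun y : ℝ => y/Real.cosh y^4) atBot (nhds 0) := by
  have h := (ycosh_top.comp tendsto_neg_atBot_atTop).neg
  simp only [Function.comp] at h
  rw [neg_zero] at h
  apply h.congr
  intro y
  rw [Real.cosh_neg]; ring

lemma F_top : Filter.Tendsto Ffun atTop (nhds (-1/8)) := by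
  have h := ((ycosh_top.div_const 16).neg.sub (tanh_top.const_mul (3/16))).add
    ((tanh_top.pow 3).const_mul (1/16))
  norm_num at h
  rw [show (-1/8 : ℝ) = -(1/8) by norm_num]
  exact h.congr (fun y => by simp [Ffun]; ring)

lemma F_bot : Filter.Tendsto Ffun atBot (nhds (1/8)) := by
  have h := ((ycosh_bot.div_const 16).neg.sub (tanh_bot.const_mul (3/16))).add
    ((tanh_bot.pow 3).const_mul (1/16))
  norm_num at h
  exact h.congr (fun y => by simp [Ffun]; ring)

lemma f_bound (y : ℝ) :
    |(1 / Real.cosh y) ^ 2 * ((1 / 4) * (y * Real.tanh y - 1) * (1 / Real.cosh y) ^ 2)|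
      ≤ 4 * Real.exp (-|y|) := by
  have hc := Real.cosh_pos y
  have htl : |Real.tanh y| ≤ 1 := by
    rw [Real.tanh_eq_sinh_div_cosh, abs_div, abs_of_pos hc, div_le_one hc]
    nlinarith [Real.cosh_sq_sub_sinh_sq y, sq_abs (Real.sinh y), abs_nonneg (Real.sinh y)]
  have h2 : |y * Real.tanh y - 1| ≤ Real.exp |y| := by
    calc |y * Real.tanh y - 1| ≤ |y * Real.tanh y| + 1 := by
          simpa using abs_sub (y * Real.tanh y) 1
      _ ≤ |y| + 1 := by
          rw [abs_mul]
          have : |y| * |Real.tanh y| ≤ |y| * 1 := mul_le_mul_of_nonneg_left htl (abs_nonneg y)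
          linarith
      _ ≤ Real.exp |y| := by linarith [Real.add_one_le_exp |y|]
  have h3 : Real.exp |y| ≤ 2 * Real.cosh y := by
    rw [← Real.cosh_abs, Real.cosh_eq]
    have := Real.exp_pos (-|y|); linarith
  have he1 : (1:ℝ) ≤ Real.exp |y| := Real.one_le_exp (abs_nonneg y)
  have e1 : (1 / Real.cosh y) ^ 2 * ((1 / 4) * (y * Real.tanh y - 1) * (1 / Real.cosh y) ^ 2)
      = (y * Real.tanh y - 1) / (4 * Real.cosh y ^ 4) := by
    have hcn := hc.ne'
    field_simp
  have hpos : (0:ℝ) < 4 * Real.cosh y ^ 4 := by nlinarith [pow_pos hc 4]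
  rw [e1, abs_div, abs_of_pos hpos]
  rw [div_le_iff₀ hpos, Real.exp_neg]
  have key : |y * Real.tanh y - 1| * Real.exp |y| ≤ 16 * Real.cosh y ^ 4 := by
    have h4 : Real.exp |y| * Real.exp |y| ≤ 16 * Real.cosh y ^ 4 := by
      have ha := pow_le_pow_left₀ (by positivity : (0:ℝ) ≤ Real.exp |y| / 2)
        (by linarith : Real.exp |y| / 2 ≤ Real.cosh y) 4
      have hE2 : Real.exp |y| * Real.exp |y| ≤ Real.exp |y| ^ 4 := by
        nlinarith [Real.exp_pos |y|, sq_nonneg (Real.exp |y|), sq_nonneg (Real.exp |y| - 1),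
          mul_pos (Real.exp_pos |y|) (Real.exp_pos |y|)]
      nlinarith [ha]
    calc |y * Real.tanh y - 1| * Real.exp |y| ≤ Real.exp |y| * Real.exp |y| :=
          mul_le_mul_of_nonneg_right h2 (Real.exp_pos _).le
      _ ≤ 16 * Real.cosh y ^ 4 := h4
  calc |y * Real.tanh y - 1| = |y * Real.tanh y - 1| * Real.exp |y| * (Real.exp |y|)⁻¹ := by
        field_simp
    _ ≤ 16 * Real.cosh y ^ 4 * (Real.exp |y|)⁻¹ := by
        apply mul_le_mul_of_nonneg_right key (by positivity)
    _ = 4 * (Real.exp |y|)⁻¹ * (4 * Real.cosh y ^ 4) := by ring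

lemma f_cont : Continuous (fun y : ℝ =>
    (1 / Real.cosh y) ^ 2 * ((1 / 4) * (y * Real.tanh y - 1) * (1 / Real.cosh y) ^ 2)) := by
  have ht : Continuous Real.tanh := by
    have : Real.tanh = fun y => Real.sinh y / Real.cosh y :=
      funext fun y => Real.tanh_eq_sinh_div_cosh y
    rw [this]
    exact Real.continuous_sinh.div Real.continuous_cosh (fun y => (Real.cosh_pos y).ne')
  have hsech : Continuous (fun y : ℝ => (1 / Real.cosh y) ^ 2) :=
    ((continuous_const.div Real.continuous_cosh (fun y => (Real.cosh_pos y).ne')).pow 2)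
  exact hsech.mul ((continuous_const.mul ((continuous_id.mul ht).sub continuous_const)).mul hsech)

lemma f_int_Ioi : IntegrableOn (fun y : ℝ =>
    (1 / Real.cosh y) ^ 2 * ((1 / 4) * (y * Real.tanh y - 1) * (1 / Real.cosh y) ^ 2)) (Set.Ioi 0) := by
  apply Integrable.mono' (g := fun y : ℝ => 4 * Real.exp (-1 * y))
  · exact (exp_neg_integrableOn_Ioi 0 one_pos).const_mul 4
  · exact f_cont.aestronglyMeasurable.restrict
  · rw [ae_restrict_iff' measurableSet_Ioi]
    filter_upwards with y hy
    rw [Real.norm_eq_abs]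
    calc _ ≤ 4 * Real.exp (-|y|) := f_bound y
      _ = 4 * Real.exp (-1*y) := by rw [abs_of_pos hy]; norm_num

lemma f_int_Iic : IntegrableOn (fun y : ℝ =>
    (1 / Real.cosh y) ^ 2 * ((1 / 4) * (y * Real.tanh y - 1) * (1 / Real.cosh y) ^ 2)) (Set.Iic 0) := by
  apply Integrable.mono' (g := fun y : ℝ => 4 * Real.exp y)
  · exact (integrableOn_exp_Iic 0).const_mul 4
  · exact f_cont.aestronglyMeasurable.restrict
  · rw [ae_restrict_iff' measurableSet_Iic]
    filter_upwards with y hy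
    rw [Real.norm_eq_abs]
    calc _ ≤ 4 * Real.exp (-|y|) := f_bound y
      _ = 4 * Real.exp y := by rw [abs_of_nonpos hy]; norm_num


/-- `W(y) = (1/4)(y·tanh y − 1)·sech²y` solves `−W'' + 4W − 12 sech²(y)W = sech²(y)`
and `∫ sech²(y)·W(y) dy = −1/4`. -/
theorem W_inhomogeneous_solution (W : ℝ → ℝ)
    (hW : W = fun y => (1 / 4) * (y * Real.tanh y - 1) * (1 / Real.cosh y) ^ 2) :
    (∀ y : ℝ, -deriv (deriv W) y + 4 * W y - 12 * (1 / Real.cosh y) ^ 2 * W y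
      = (1 / Real.cosh y) ^ 2) ∧
    (∫ y : ℝ, (1 / Real.cosh y) ^ 2 * W y) = -1 / 4 := by
  subst hW
  constructor
  · intro y
    have hd1 : deriv (fun y => (1 / 4) * (y * Real.tanh y - 1) * (1 / Real.cosh y) ^ 2) = W1 :=
      funext fun x => (hasDerivAt_W x).deriv
    rw [hd1, (hasDerivAt_W1 y).deriv]
    have hc := (Real.cosh_pos y).ne'
    simp only [W2]
    rw [Real.tanh_eq_sinh_div_cosh]
    field_simp
    ring
  · have hIoi := integral_Ioi_of_hasDerivAt_of_tendsto' (a := 0)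
      (fun x _ => hasDerivAt_F x) f_int_Ioi F_top
    have hIic := integral_Iic_of_hasDerivAt_of_tendsto' (a := 0)
      (fun x _ => hasDerivAt_F x) f_int_Iic F_bot
    have hF0 : Ffun 0 = 0 := by simp [Ffun]
    rw [hF0] at hIoi hIic
    beta_reduce
    rw [← intervalIntegral.integral_Iic_add_Ioi f_int_Iic f_int_Ioi, hIoi, hIic]
    norm_num
end

section
/- The function W̃(y) = (1/12)·sech²(y)·(3·y·tanh y − 1) satisfies −W̃''(y) + 4·W̃(y) − 12·sech²(y)·W̃(y) = sech²(y)·tanh²(y) for all y ∈ ℝ, and moreover ∫_ℝ sech²(y)·tanh²(y)·W̃(y) dy = 1/60. -/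
open MeasureTheory

open Real Filter Set in
private lemma my_hasDerivAt_tanh (y : ℝ) : HasDerivAt Real.tanh (1 - Real.tanh y ^ 2) y := by
  have hc : Real.cosh y ≠ 0 := (Real.cosh_pos y).ne'
  have h : Real.tanh = fun x => Real.sinh x / Real.cosh x :=
    funext fun x => Real.tanh_eq_sinh_div_cosh x
  rw [h]
  have := (Real.hasDerivAt_sinh y).div (Real.hasDerivAt_cosh y) hc
  refine this.congr_deriv (Eq.symm ?_)
  show 1 - (Real.sinh y / Real.cosh y) ^ 2 = _
  field_simp

private lemma my_sech_sq (y : ℝ) : (1 / Real.cosh y) ^ 2 = 1 - Real.tanh y ^ 2 := by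
  have hc : Real.cosh y ≠ 0 := (Real.cosh_pos y).ne'
  rw [Real.tanh_eq_sinh_div_cosh]
  field_simp
  exact (Real.cosh_sq_sub_sinh_sq y).symm

private lemma my_tanh_abs_le (y : ℝ) : |Real.tanh y| ≤ 1 := by
  have h2 : Real.tanh y ^ 2 ≤ 1 := by
    nlinarith [my_sech_sq y, sq_nonneg (1 / Real.cosh y)]
  nlinarith [abs_nonneg (Real.tanh y), sq_abs (Real.tanh y)]

private lemma my_sech_le (y : ℝ) : 1 / Real.cosh y ≤ 2 * Real.exp (-y) := by
  have h : 1 / Real.cosh y ≤ 2 / Real.exp y := by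
    rw [div_le_div_iff₀ (Real.cosh_pos y) (Real.exp_pos y)]
    nlinarith [Real.cosh_eq y, Real.exp_pos (-y)]
  calc 1 / Real.cosh y ≤ 2 / Real.exp y := h
    _ = 2 * Real.exp (-y) := by rw [Real.exp_neg]; ring

noncomputable def Vf : ℝ → ℝ := fun y =>
  (3*y*Real.sinh y - Real.cosh y)/(12 * Real.cosh y^3)
noncomputable def V1 : ℝ → ℝ := fun y =>
  (5*Real.sinh y*Real.cosh y + 3*y*Real.cosh y^2 - 9*y*Real.sinh y^2) / (12*Real.cosh y^4)
noncomputable def V2 : ℝ → ℝ := fun y =>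
  (8*Real.cosh y^3 - 24*Real.sinh y^2*Real.cosh y - 24*y*Real.cosh y^2*Real.sinh y
    + 36*y*Real.sinh y^3)/(12*Real.cosh y^5)

private lemma hV1 (y : ℝ) : HasDerivAt Vf (V1 y) y := by
  have hc : Real.cosh y ≠ 0 := (Real.cosh_pos y).ne'
  have hnum : HasDerivAt (fun y => 3*y*Real.sinh y - Real.cosh y)
      (3*Real.sinh y + 3*y*Real.cosh y - Real.sinh y) y := by
    have h1 : HasDerivAt (fun y : ℝ => 3*y) 3 y := by
      simpa using (hasDerivAt_id y).const_mul 3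
    exact (h1.mul (Real.hasDerivAt_sinh y)).sub (Real.hasDerivAt_cosh y)
  have hden : HasDerivAt (fun y => 12 * Real.cosh y^3) (36 * Real.cosh y^2 * Real.sinh y) y := by
    have := ((Real.hasDerivAt_cosh y).pow 3).const_mul 12
    refine this.congr_deriv ?_; ring
  have := hnum.div hden (by positivity)
  refine this.congr_deriv ?_
  unfold V1
  field_simp
  ring

private lemma hV2 (y : ℝ) : HasDerivAt V1 (V2 y) y := by
  have hc : Real.cosh y ≠ 0 := (Real.cosh_pos y).ne'
  have hnum : HasDerivAt
      (fun y => 5*Real.sinh y*Real.cosh y + 3*y*Real.cosh y^2 - 9*y*Real.sinh y^2)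
      (5*Real.cosh y*Real.cosh y + 5*Real.sinh y*Real.sinh y
        + (3*Real.cosh y^2 + 3*y*(2*Real.cosh y*Real.sinh y))
        - (9*Real.sinh y^2 + 9*y*(2*Real.sinh y*Real.cosh y))) y := by
    have h1 : HasDerivAt (fun y : ℝ => 5*Real.sinh y) (5*Real.cosh y) y :=
      (Real.hasDerivAt_sinh y).const_mul 5
    have h2 := h1.mul (Real.hasDerivAt_cosh y)
    have h3 : HasDerivAt (fun y : ℝ => 3*y) 3 y := by simpa using (hasDerivAt_id y).const_mul 3
    have h4 := h3.mul ((Real.hasDerivAt_cosh y).pow 2)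
    have h5 : HasDerivAt (fun y : ℝ => 9*y) 9 y := by simpa using (hasDerivAt_id y).const_mul 9
    have h6 := h5.mul ((Real.hasDerivAt_sinh y).pow 2)
    have := (h2.add h4).sub h6
    refine this.congr_deriv ?_
    push_cast [Pi.pow_apply]
    ring
  have hden : HasDerivAt (fun y => 12 * Real.cosh y^4) (48 * Real.cosh y^3 * Real.sinh y) y := by
    have := ((Real.hasDerivAt_cosh y).pow 4).const_mul 12
    refine this.congr_deriv ?_
    push_cast
    ring
  have := hnum.div hden (by positivity)
  refine this.congr_deriv ?_
  unfold V2
  field_simp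
  ring

private lemma ode_algebra (y : ℝ) :
    -V2 y + 4 * Vf y - 12 * (1 / Real.cosh y) ^ 2 * Vf y
      = (1 / Real.cosh y) ^ 2 * Real.tanh y ^ 2 := by
  have hc : Real.cosh y ≠ 0 := (Real.cosh_pos y).ne'
  have h := Real.cosh_sq_sub_sinh_sq y
  unfold Vf V2
  rw [Real.tanh_eq_sinh_div_cosh]
  field_simp
  linear_combination (36*Real.sinh y*y - 12*Real.cosh y) * h

noncomputable def Ff : ℝ → ℝ := fun y =>
  y*(Real.tanh y^4/16 - Real.tanh y^6/24 - 1/48) + Real.tanh y/48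
    - Real.tanh y^3/48 + Real.tanh y^5/120

private lemma hFf (y : ℝ) : HasDerivAt Ff
    ((1 / Real.cosh y) ^ 2 * Real.tanh y ^ 2 *
      ((1 / 12) * (1 / Real.cosh y) ^ 2 * (3 * y * Real.tanh y - 1))) y := by
  have ht := my_hasDerivAt_tanh y
  have h1 : HasDerivAt (fun x : ℝ => x*(Real.tanh x^4/16 - Real.tanh x^6/24 - 1/48))
      ((Real.tanh y^4/16 - Real.tanh y^6/24 - 1/48)
        + y * ((4*Real.tanh y^3*(1 - Real.tanh y^2))/16
          - (6*Real.tanh y^5*(1 - Real.tanh y^2))/24)) y := by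
    have := (hasDerivAt_id y).mul
      ((((ht.pow 4).div_const 16).sub ((ht.pow 6).div_const 24)).sub_const (1/48))
    refine this.congr_deriv ?_
    push_cast
    simp only [id_eq, Pi.sub_apply, Pi.pow_apply]
    ring
  have h2 := ((h1.add (ht.div_const 48)).sub ((ht.pow 3).div_const 48)).add
    ((ht.pow 5).div_const 120)
  refine h2.congr_deriv ?_
  rw [my_sech_sq]
  push_cast
  ring

open Real Filter in
private lemma tendsto_my_tanh : Filter.Tendsto Real.tanh Filter.atTop (nhds 1) := by
  have h : ∀ y : ℝ, Real.tanh y = (1 - Real.exp (-(2*y))) / (1 + Real.exp (-(2*y))) := by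
    intro y
    have he : Real.exp y ≠ 0 := (Real.exp_pos y).ne'
    have hd : 1 + Real.exp (-(2*y)) ≠ 0 := by positivity
    rw [Real.tanh_eq_sinh_div_cosh, Real.sinh_eq, Real.cosh_eq,
      show -(2*y) = -y + -y by ring, Real.exp_add, Real.exp_neg]
    field_simp
  have hexp : Tendsto (fun y : ℝ => Real.exp (-(2*y))) atTop (nhds 0) := by
    apply Real.tendsto_exp_atBot.comp
    exact tendsto_neg_atTop_atBot.comp (tendsto_id.const_mul_atTop two_pos)
  have h1 : Tendsto (fun y : ℝ => 1 - Real.exp (-(2*y))) atTop (nhds 1) := by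
    simpa using (tendsto_const_nhds.sub hexp)
  have h2 : Tendsto (fun y : ℝ => 1 + Real.exp (-(2*y))) atTop (nhds 1) := by
    simpa using (tendsto_const_nhds.add hexp)
  exact Tendsto.congr (fun y => (h y).symm) (by convert h1.div h2 one_ne_zero using 2 <;> norm_num)

open Real Filter in
private lemma tendsto_y_sech4 :
    Filter.Tendsto (fun y : ℝ => y * ((1 / Real.cosh y) ^ 2) ^ 2) Filter.atTop (nhds 0) := by
  have hupper : Tendsto (fun y : ℝ => 16 * (y * Real.exp (-(4*y)))) atTop (nhds 0) := by
    have h0 := (tendsto_pow_mul_exp_neg_atTop_nhds_zero 1).comp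
      (tendsto_id.const_mul_atTop (show (0:ℝ) < 4 by norm_num))
    have h1 : Tendsto (fun y : ℝ => 4 * ((4*y)^1 * Real.exp (-(4*y)))) atTop (nhds 0) := by
      simpa using h0.const_mul 4
    refine h1.congr fun y => by ring
  apply squeeze_zero' (t₀ := atTop)
    (g := fun y : ℝ => 16 * (y * Real.exp (-(4*y))))
  · filter_upwards [eventually_ge_atTop (0:ℝ)] with y hy
    positivity
  · filter_upwards [eventually_ge_atTop (0:ℝ)] with y hy
    have h1c : 1 / Real.cosh y ≤ 2 * Real.exp (-y) := my_sech_le y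
    have h4 : ((1/Real.cosh y)^2)^2 ≤ 16 * Real.exp (-(4*y)) := by
      have hp := pow_le_pow_left₀ (by positivity) h1c 4
      calc ((1/Real.cosh y)^2)^2 = (1/Real.cosh y)^4 := by ring
        _ ≤ (2*Real.exp (-y))^4 := hp
        _ = 16 * Real.exp (-(4*y)) := by
            rw [show -(4*y) = -y + -y + -y + -y by ring, Real.exp_add, Real.exp_add,
              Real.exp_add]
            ring
    calc y * ((1/Real.cosh y)^2)^2 ≤ y * (16 * Real.exp (-(4*y))) := by
          exact mul_le_mul_of_nonneg_left h4 hy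
      _ = 16 * (y * Real.exp (-(4*y))) := by ring
  · exact hupper

open Real Filter in
private lemma tendsto_Ff : Filter.Tendsto Ff Filter.atTop (nhds (1/120)) := by
  have hcoef : Tendsto (fun y : ℝ => -(1 + 2*Real.tanh y^2)/48) atTop (nhds (-(1+2*1^2)/48)) := by
    exact (((tendsto_const_nhds.add ((tendsto_my_tanh.pow 2).const_mul 2)).neg).div_const 48)
  have hmain := ((tendsto_y_sech4.mul hcoef).add (tendsto_my_tanh.div_const 48)).sub
    ((tendsto_my_tanh.pow 3).div_const 48) |>.add ((tendsto_my_tanh.pow 5).div_const 120)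
  have hval : (0 * (-(1+2*1^2)/48) + 1/48 - 1^3/48 + 1^5/120 : ℝ) = 1/120 := by norm_num
  rw [hval] at hmain
  refine hmain.congr fun y => ?_
  show y * ((1 / Real.cosh y) ^ 2) ^ 2 * (-(1 + 2*Real.tanh y^2)/48) + Real.tanh y/48
    - Real.tanh y^3/48 + Real.tanh y^5/120 = Ff y
  rw [my_sech_sq]
  unfold Ff
  ring

private lemma hg_cont : Continuous (fun y : ℝ => (1 / Real.cosh y) ^ 2 * Real.tanh y ^ 2 *
    ((1 / 12) * (1 / Real.cosh y) ^ 2 * (3 * y * Real.tanh y - 1))) := by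
  have htanh : Continuous Real.tanh :=
    continuous_iff_continuousAt.mpr fun x => (my_hasDerivAt_tanh x).continuousAt
  have hsech : Continuous (fun y : ℝ => 1 / Real.cosh y) :=
    continuous_const.div Real.continuous_cosh fun x => (Real.cosh_pos x).ne'
  exact ((hsech.pow 2).mul (htanh.pow 2)).mul
    ((continuous_const.mul (hsech.pow 2)).mul
      (((continuous_const.mul continuous_id).mul htanh).sub continuous_const))

open Real Filter Set in
private lemma hg_int : IntegrableOn (fun y : ℝ => (1 / Real.cosh y) ^ 2 * Real.tanh y ^ 2 *
    ((1 / 12) * (1 / Real.cosh y) ^ 2 * (3 * y * Real.tanh y - 1))) (Ioi 0) := by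
  have hint : IntegrableOn (fun y : ℝ => (16/3) * Real.exp (-3*y)) (Ioi 0) :=
    (exp_neg_integrableOn_Ioi 0 (show (0:ℝ) < 3 by norm_num)).const_mul _
  refine Integrable.mono hint hg_cont.aestronglyMeasurable.restrict ?_
  filter_upwards [ae_restrict_mem measurableSet_Ioi] with y hy
  have hy0 : (0:ℝ) ≤ y := le_of_lt hy
  have ht := my_tanh_abs_le y
  have h1c : 1 / Real.cosh y ≤ 2 * Real.exp (-y) := my_sech_le y
  have hsp : (0:ℝ) ≤ 1 / Real.cosh y := by positivity
  have e1 : |3*y*Real.tanh y - 1| ≤ 3*y + 1 := by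
    rw [abs_le] at ht ⊢
    constructor <;> nlinarith [ht.1, ht.2]
  have ht2 : Real.tanh y ^ 2 ≤ 1 := by
    nlinarith [my_sech_sq y, sq_nonneg (1 / Real.cosh y)]
  have e2 : 3*y + 1 ≤ 4 * Real.exp y := by
    nlinarith [Real.add_one_le_exp y, Real.exp_pos y]
  rw [Real.norm_eq_abs, Real.norm_eq_abs]
  calc |(1 / Real.cosh y) ^ 2 * Real.tanh y ^ 2 *
        ((1 / 12) * (1 / Real.cosh y) ^ 2 * (3 * y * Real.tanh y - 1))|
      = (1 / Real.cosh y) ^ 2 * Real.tanh y ^ 2 *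
        ((1 / 12) * (1 / Real.cosh y) ^ 2) * |3 * y * Real.tanh y - 1| := by
        rw [abs_mul, abs_mul, abs_mul,
          abs_of_nonneg (sq_nonneg (1/Real.cosh y)), abs_of_nonneg (sq_nonneg (Real.tanh y)),
          abs_of_nonneg (by positivity : (0:ℝ) ≤ (1:ℝ)/12 * (1/Real.cosh y)^2)]
        ring
    _ ≤ (2 * Real.exp (-y)) ^ 2 * 1 * ((1 / 12) * (2 * Real.exp (-y)) ^ 2) * (4 * Real.exp y) := by
        gcongr <;> first | exact hsp | exact h1c | exact ht2 | exact e1.trans e2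
    _ = (16/3) * (Real.exp (-y) * Real.exp (-y) * Real.exp (-y) * Real.exp (-y) * Real.exp y) := by
        ring
    _ = (16/3) * Real.exp (-3*y) := by
        rw [show Real.exp (-y) * Real.exp (-y) * Real.exp (-y) * Real.exp (-y) * Real.exp y
          = Real.exp (-3*y) from by
            rw [show (-3*y : ℝ) = -y + -y + -y + -y + y by ring, Real.exp_add, Real.exp_add,
              Real.exp_add, Real.exp_add]]
    _ = |(16/3) * Real.exp (-3*y)| := by
        rw [abs_of_nonneg (by positivity)]

open Real Filter Set in
/-- `W̃(y) = (1/12)·sech²(y)·(3y·tanh y − 1)` solves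
`−W̃'' + 4W̃ − 12 sech²(y)W̃ = sech²(y)tanh²(y)` and
`∫ sech²(y)tanh²(y)·W̃(y) dy = 1/60`. -/
theorem W_tilde_inhomogeneous_solution (W : ℝ → ℝ)
    (hW : W = fun y => (1 / 12) * (1 / Real.cosh y) ^ 2 * (3 * y * Real.tanh y - 1)) :
    (∀ y : ℝ, -deriv (deriv W) y + 4 * W y - 12 * (1 / Real.cosh y) ^ 2 * W y
      = (1 / Real.cosh y) ^ 2 * Real.tanh y ^ 2) ∧
    (∫ y : ℝ, (1 / Real.cosh y) ^ 2 * Real.tanh y ^ 2 * W y) = 1 / 60 := by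
  have hWV : W = Vf := by
    funext x
    rw [hW]
    have hc : Real.cosh x ≠ 0 := (Real.cosh_pos x).ne'
    show (1 / 12) * (1 / Real.cosh x) ^ 2 * (3 * x * Real.tanh x - 1) = Vf x
    unfold Vf
    symm
    rw [div_eq_iff (by positivity : (12:ℝ)*Real.cosh x^3 ≠ 0), Real.tanh_eq_sinh_div_cosh]
    field_simp
    try ring
    try (left; first | trivial | ring)
  constructor
  · intro y
    have hd1 : deriv W = V1 := by
      funext x
      rw [hWV]
      exact (hV1 x).deriv
    have hd2 : deriv (deriv W) y = V2 y := by
      rw [hd1]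
      exact (hV2 y).deriv
    rw [hd2, hWV]
    exact ode_algebra y
  · subst hW
    set g : ℝ → ℝ := fun y => (1 / Real.cosh y) ^ 2 * Real.tanh y ^ 2 *
      ((1 / 12) * (1 / Real.cosh y) ^ 2 * (3 * y * Real.tanh y - 1)) with hg
    have heven : ∀ y : ℝ, g |y| = g y := by
      intro y
      rcases abs_cases y with ⟨h, _⟩ | ⟨h, _⟩
      · rw [h]
      · rw [h, hg]
        simp only [Real.tanh_neg, Real.cosh_neg]
        ring
    have hIoi : (∫ y in Ioi (0:ℝ), g y) = 1/120 - Ff 0 :=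
      integral_Ioi_of_hasDerivAt_of_tendsto' (fun x _ => hFf x) hg_int tendsto_Ff
    have hF0 : Ff 0 = 0 := by simp [Ff]
    calc (∫ y : ℝ, (1 / Real.cosh y) ^ 2 * Real.tanh y ^ 2 *
          ((1 / 12) * (1 / Real.cosh y) ^ 2 * (3 * y * Real.tanh y - 1)))
        = ∫ y : ℝ, g |y| := by
          exact (integral_congr_ae (Filter.Eventually.of_forall fun y => (heven y).symm))
      _ = 2 * ∫ y in Ioi (0:ℝ), g y := integral_comp_abs
      _ = 1 / 60 := by rw [hIoi, hF0]; norm_num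
end

section
/- Let γ ∈ ℝ. The functions υ₀(η) = tanh(η)·sech²(η) and z₀(η) = (γ − 4)·tanh(η)·sech(η) satisfy, for all η ∈ ℝ: −υ₀''(η) + γ·υ₀(η) − 12·sech²(η)·υ₀(η) = sech(η)·z₀(η) and −z₀''(η) + z₀(η) − 2·sech²(η)·z₀(η) = 4·(γ − 4)·sech(η)·υ₀(η). Moreover ∫_ℝ sech(η)·υ₀(η)·z₀(η) dη = (4/15)·(γ − 4). -/
open MeasureTheory Real Set Filter
open scoped Topology

private lemma my_hasDerivAt_tanh_s17 (x : ℝ) :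
    HasDerivAt Real.tanh (1 / Real.cosh x ^ 2) x := by
  have h := (Real.hasDerivAt_sinh x).fun_div (Real.hasDerivAt_cosh x) (Real.cosh_pos x).ne'
  have he : Real.tanh = fun y => Real.sinh y / Real.cosh y := by
    funext y; exact Real.tanh_eq_sinh_div_cosh y
  rw [he]
  refine h.congr_deriv (Eq.symm ?_)
  have hid := Real.cosh_sq_sub_sinh_sq x
  field_simp
  linarith

private lemma my_tendsto_tanh_top : Tendsto Real.tanh atTop (𝓝 1) := by
  have key : ∀ x : ℝ, Real.tanh x = (1 - Real.exp (-2 * x)) / (1 + Real.exp (-2 * x)) := by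
    intro x
    have h2 : Real.exp (-2 * x) = (Real.exp x)⁻¹ * (Real.exp x)⁻¹ := by
      rw [← Real.exp_neg, ← Real.exp_add]; ring_nf
    have hne : Real.exp x ≠ 0 := (Real.exp_pos x).ne'
    rw [Real.tanh_eq_sinh_div_cosh, Real.sinh_eq, Real.cosh_eq, h2, Real.exp_neg]
    have hden : (Real.exp x + (Real.exp x)⁻¹) / 2 ≠ 0 := by positivity
    have hden2 : (1 : ℝ) + (Real.exp x)⁻¹ * (Real.exp x)⁻¹ ≠ 0 := by positivity
    field_simp
  have h0 : Tendsto (fun x : ℝ => Real.exp (-2 * x)) atTop (𝓝 0) := by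
    have h2 : Tendsto (fun x : ℝ => 2 * x) atTop atTop :=
      Tendsto.const_mul_atTop two_pos tendsto_id
    have h1 : Tendsto (fun x : ℝ => -(2 * x)) atTop atBot :=
      tendsto_neg_atTop_atBot.comp h2
    have h3 := Real.tendsto_exp_atBot.comp h1
    simpa [Function.comp_def, neg_mul] using h3
  have hd : Tendsto (fun x : ℝ => (1 - Real.exp (-2 * x)) / (1 + Real.exp (-2 * x)))
      atTop (𝓝 ((1 - 0) / (1 + 0))) :=
    Tendsto.div ((tendsto_const_nhds : Tendsto (fun _ : ℝ => (1:ℝ)) atTop (𝓝 1)).sub h0)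
      ((tendsto_const_nhds : Tendsto (fun _ : ℝ => (1:ℝ)) atTop (𝓝 1)).add h0)
      (by norm_num)
  norm_num at hd
  refine Tendsto.congr (fun x => ?_) hd
  rw [key x]; ring_nf

private lemma my_tendsto_tanh_bot : Tendsto Real.tanh atBot (𝓝 (-1)) := by
  have := (my_tendsto_tanh_top.comp tendsto_neg_atBot_atTop).neg
  simp only [Function.comp_def] at this
  exact Tendsto.congr (fun x => by rw [← Real.tanh_neg, neg_neg]) this

private lemma my_hd_u (η : ℝ) :
    HasDerivAt (fun η => Real.sinh η / Real.cosh η ^ 3)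
      ((3 - 2 * Real.cosh η ^ 2) / Real.cosh η ^ 4) η := by
  have hc := Real.hasDerivAt_cosh η
  have hs := Real.hasDerivAt_sinh η
  have h3 : HasDerivAt (fun η => Real.cosh η ^ 3) (3 * Real.cosh η ^ 2 * Real.sinh η) η := by
    simpa [mul_comm] using hc.fun_pow 3
  have h := hs.fun_div h3 (by positivity)
  refine h.congr_deriv (Eq.symm ?_)
  have hid := Real.cosh_sq_sub_sinh_sq η
  have hcne : Real.cosh η ≠ 0 := (Real.cosh_pos η).ne'
  field_simp
  nlinarith [hid, Real.cosh_pos η]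

private lemma my_hd_u2 (η : ℝ) :
    HasDerivAt (fun η => (3 - 2 * Real.cosh η ^ 2) / Real.cosh η ^ 4)
      (Real.sinh η * (4 * Real.cosh η ^ 2 - 12) / Real.cosh η ^ 5) η := by
  have hc := Real.hasDerivAt_cosh η
  have hnum : HasDerivAt (fun η => 3 - 2 * Real.cosh η ^ 2)
      (-(4 * Real.cosh η * Real.sinh η)) η := by
    have := ((hc.fun_pow 2).const_mul (2 : ℝ)).const_sub 3
    refine this.congr_deriv (Eq.symm ?_); ring
  have hden : HasDerivAt (fun η => Real.cosh η ^ 4) (4 * Real.cosh η ^ 3 * Real.sinh η) η := by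
    simpa [mul_comm] using hc.fun_pow 4
  have h := hnum.fun_div hden (by positivity)
  refine h.congr_deriv (Eq.symm ?_)
  have hcne : Real.cosh η ≠ 0 := (Real.cosh_pos η).ne'
  field_simp
  ring

private lemma my_hd_z (η : ℝ) :
    HasDerivAt (fun η => Real.sinh η / Real.cosh η ^ 2)
      ((2 - Real.cosh η ^ 2) / Real.cosh η ^ 3) η := by
  have hc := Real.hasDerivAt_cosh η
  have hs := Real.hasDerivAt_sinh η
  have h2 : HasDerivAt (fun η => Real.cosh η ^ 2) (2 * Real.cosh η * Real.sinh η) η := by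
    simpa [mul_comm] using hc.fun_pow 2
  have h := hs.fun_div h2 (by positivity)
  refine h.congr_deriv (Eq.symm ?_)
  have hid := Real.cosh_sq_sub_sinh_sq η
  have hcne : Real.cosh η ≠ 0 := (Real.cosh_pos η).ne'
  field_simp
  nlinarith [hid, Real.cosh_pos η]

private lemma my_hd_z2 (η : ℝ) :
    HasDerivAt (fun η => (2 - Real.cosh η ^ 2) / Real.cosh η ^ 3)
      (Real.sinh η * (Real.cosh η ^ 2 - 6) / Real.cosh η ^ 4) η := by
  have hc := Real.hasDerivAt_cosh η
  have hnum : HasDerivAt (fun η => 2 - Real.cosh η ^ 2)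
      (-(2 * Real.cosh η * Real.sinh η)) η := by
    have := (hc.fun_pow 2).const_sub 2
    refine this.congr_deriv (Eq.symm ?_); ring
  have hden : HasDerivAt (fun η => Real.cosh η ^ 3) (3 * Real.cosh η ^ 2 * Real.sinh η) η := by
    simpa [mul_comm] using hc.fun_pow 3
  have h := hnum.fun_div hden (by positivity)
  refine h.congr_deriv (Eq.symm ?_)
  have hcne : Real.cosh η ≠ 0 := (Real.cosh_pos η).ne'
  field_simp
  ring

private noncomputable def myF (η : ℝ) : ℝ := Real.tanh η ^ 3 / 3 - Real.tanh η ^ 5 / 5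

private lemma my_hd_F (η : ℝ) :
    HasDerivAt myF (Real.tanh η ^ 2 / Real.cosh η ^ 4) η := by
  have ht := my_hasDerivAt_tanh_s17 η
  have h := (((ht.fun_pow 3)).div_const 3).fun_sub ((ht.fun_pow 5).div_const 5)
  refine h.congr_deriv (Eq.symm ?_)
  have hcne : Real.cosh η ≠ 0 := (Real.cosh_pos η).ne'
  have hts : Real.tanh η ^ 2 = Real.sinh η ^ 2 / Real.cosh η ^ 2 := by
    rw [Real.tanh_eq_sinh_div_cosh, div_pow]
  have hid := Real.cosh_sq_sub_sinh_sq η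
  rw [Real.tanh_eq_sinh_div_cosh]
  norm_num
  field_simp
  linear_combination (-Real.sinh η ^ 2 : ℝ) * hid

private lemma myF_top : Filter.Tendsto myF atTop (𝓝 (2 / 15)) := by
  have h := ((my_tendsto_tanh_top.pow 3).div_const 3).sub ((my_tendsto_tanh_top.pow 5).div_const 5)
  norm_num at h
  exact h

private lemma myF_bot : Filter.Tendsto myF atBot (𝓝 (-(2 / 15))) := by
  have h := ((my_tendsto_tanh_bot.pow 3).div_const 3).sub ((my_tendsto_tanh_bot.pow 5).div_const 5)
  norm_num at h
  convert h using 1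
  rfl

private lemma my_h_cont : Continuous (fun η : ℝ => Real.tanh η ^ 2 / Real.cosh η ^ 4) := by
  have ht : Continuous Real.tanh := by
    have : Real.tanh = fun y => Real.sinh y / Real.cosh y := by
      funext y; exact Real.tanh_eq_sinh_div_cosh y
    rw [this]
    exact Real.continuous_sinh.div Real.continuous_cosh fun x => (Real.cosh_pos x).ne'
  exact (ht.pow 2).div (Real.continuous_cosh.pow 4) fun x => by positivity

private lemma my_h_bound (x : ℝ) :
    Real.tanh x ^ 2 / Real.cosh x ^ 4 ≤ 4 / Real.exp |x| := by
  have hc : Real.exp |x| / 2 ≤ Real.cosh x := by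
    rw [Real.cosh_eq]
    rcases abs_cases x with ⟨h, _⟩ | ⟨h, _⟩ <;> rw [h] <;> nlinarith [Real.exp_pos (-x), Real.exp_pos x]
  have hc1 : (1 : ℝ) ≤ Real.cosh x := Real.one_le_cosh x
  have ht : Real.tanh x ^ 2 ≤ 1 := by
    have hid := Real.cosh_sq_sub_sinh_sq x
    have hts : Real.tanh x ^ 2 = Real.sinh x ^ 2 / Real.cosh x ^ 2 := by
      rw [Real.tanh_eq_sinh_div_cosh, div_pow]
    rw [hts, div_le_one (by positivity)]
    nlinarith
  have hcp : (0 : ℝ) < Real.cosh x := Real.cosh_pos x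
  have hep : (0 : ℝ) < Real.exp |x| := Real.exp_pos _
  have h1 : Real.tanh x ^ 2 / Real.cosh x ^ 4 ≤ 1 / Real.cosh x := by
    rw [div_le_div_iff₀ (by positivity) hcp]
    nlinarith [sq_nonneg (Real.tanh x), sq_nonneg (Real.cosh x - 1)]
  refine h1.trans ?_
  rw [div_le_div_iff₀ hcp hep]
  nlinarith

private lemma my_h_integrableOn_Ioi :
    IntegrableOn (fun η : ℝ => Real.tanh η ^ 2 / Real.cosh η ^ 4) (Ioi 0) := by
  have hg : IntegrableOn (fun x : ℝ => 4 * Real.exp (-1 * x)) (Ioi 0) :=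
    (exp_neg_integrableOn_Ioi 0 (by norm_num : (0:ℝ) < 1)).const_mul 4
  refine Integrable.mono hg (my_h_cont.aestronglyMeasurable.restrict) ?_
  filter_upwards [ae_restrict_mem measurableSet_Ioi] with x hx
  have h1 := my_h_bound x
  rw [abs_of_nonneg (le_of_lt hx)] at h1
  have h2 : (0:ℝ) ≤ Real.tanh x ^ 2 / Real.cosh x ^ 4 := by positivity
  rw [Real.norm_eq_abs, Real.norm_eq_abs, abs_of_nonneg h2, abs_of_nonneg (by positivity)]
  refine h1.trans (le_of_eq ?_)
  rw [neg_one_mul, Real.exp_neg, div_eq_mul_inv]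

private lemma my_h_integrableOn_Iic :
    IntegrableOn (fun η : ℝ => Real.tanh η ^ 2 / Real.cosh η ^ 4) (Iic 0) := by
  have hg : IntegrableOn (fun x : ℝ => 4 * Real.exp x) (Iic 0) :=
    (integrableOn_exp_Iic 0).const_mul 4
  refine Integrable.mono hg (my_h_cont.aestronglyMeasurable.restrict) ?_
  filter_upwards [ae_restrict_mem measurableSet_Iic] with x hx
  have h1 := my_h_bound x
  rw [abs_of_nonpos hx] at h1
  have h2 : (0:ℝ) ≤ Real.tanh x ^ 2 / Real.cosh x ^ 4 := by positivity
  rw [Real.norm_eq_abs, Real.norm_eq_abs, abs_of_nonneg h2, abs_of_nonneg (by positivity)]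
  refine h1.trans (le_of_eq ?_)
  rw [Real.exp_neg, div_eq_mul_inv, inv_inv]

private lemma my_key_integral :
    (∫ η : ℝ, Real.tanh η ^ 2 / Real.cosh η ^ 4) = 4 / 15 := by
  have hIoi : (∫ η in Ioi (0:ℝ), Real.tanh η ^ 2 / Real.cosh η ^ 4) = 2 / 15 - myF 0 :=
    integral_Ioi_of_hasDerivAt_of_tendsto (my_hd_F 0).continuousAt.continuousWithinAt
      (fun x _ => my_hd_F x) my_h_integrableOn_Ioi myF_top
  have hIic : (∫ η in Iic (0:ℝ), Real.tanh η ^ 2 / Real.cosh η ^ 4) = myF 0 - -(2 / 15) :=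
    integral_Iic_of_hasDerivAt_of_tendsto (my_hd_F 0).continuousAt.continuousWithinAt
      (fun x _ => my_hd_F x) my_h_integrableOn_Iic myF_bot
  have hF0 : myF 0 = 0 := by simp [myF]
  rw [← intervalIntegral.integral_Iic_add_Ioi my_h_integrableOn_Iic my_h_integrableOn_Ioi, hIoi, hIic, hF0]
  norm_num


/-- The translational zero mode `(υ₀, z₀)` of the Hessian of the exact coupled
solitary wave satisfies the coupled system `L₁(γ)υ₀ = sech·z₀`,
`L₂z₀ = 4(γ−4)sech·υ₀`, and the Krein quantity equals `(4/15)(γ−4)`. -/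
theorem translational_zero_mode (γ : ℝ) (υ₀ z₀ : ℝ → ℝ)
    (hυ : υ₀ = fun η => Real.tanh η * (1 / Real.cosh η) ^ 2)
    (hz : z₀ = fun η => (γ - 4) * Real.tanh η * (1 / Real.cosh η)) :
    (∀ η : ℝ, -deriv (deriv υ₀) η + γ * υ₀ η - 12 * (1 / Real.cosh η) ^ 2 * υ₀ η
      = (1 / Real.cosh η) * z₀ η) ∧
    (∀ η : ℝ, -deriv (deriv z₀) η + z₀ η - 2 * (1 / Real.cosh η) ^ 2 * z₀ η
      = 4 * (γ - 4) * (1 / Real.cosh η) * υ₀ η) ∧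
    (∫ η : ℝ, (1 / Real.cosh η) * υ₀ η * z₀ η) = (4 / 15) * (γ - 4) := by
  have hcne : ∀ x : ℝ, Real.cosh x ≠ 0 := fun x => (Real.cosh_pos x).ne'
  have hu_eq : υ₀ = fun η => Real.sinh η / Real.cosh η ^ 3 := by
    rw [hυ]; funext η; rw [Real.tanh_eq_sinh_div_cosh]; field_simp
  have hz_eq : z₀ = fun η => (γ - 4) * (Real.sinh η / Real.cosh η ^ 2) := by
    rw [hz]; funext η; rw [Real.tanh_eq_sinh_div_cosh]; field_simp
  have hdu : deriv υ₀ = fun η => (3 - 2 * Real.cosh η ^ 2) / Real.cosh η ^ 4 := by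
    rw [hu_eq]; funext η; exact (my_hd_u η).deriv
  have hdu2 : ∀ η, deriv (deriv υ₀) η
      = Real.sinh η * (4 * Real.cosh η ^ 2 - 12) / Real.cosh η ^ 5 := by
    intro η; rw [hdu]; exact (my_hd_u2 η).deriv
  have hdz : deriv z₀ = fun η => (γ - 4) * ((2 - Real.cosh η ^ 2) / Real.cosh η ^ 3) := by
    rw [hz_eq]; funext η; exact ((my_hd_z η).const_mul (γ - 4)).deriv
  have hdz2 : ∀ η, deriv (deriv z₀) η
      = (γ - 4) * (Real.sinh η * (Real.cosh η ^ 2 - 6) / Real.cosh η ^ 4) := by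
    intro η; rw [hdz]; exact ((my_hd_z2 η).const_mul (γ - 4)).deriv
  refine ⟨fun η => ?_, fun η => ?_, ?_⟩
  · rw [hdu2, hu_eq, hz_eq]
    have := hcne η
    field_simp
    ring
  · rw [hdz2, hu_eq, hz_eq]
    have := hcne η
    field_simp
    ring
  · have hfun : (fun η : ℝ => (1 / Real.cosh η) * υ₀ η * z₀ η)
        = fun η : ℝ => (γ - 4) * (Real.tanh η ^ 2 / Real.cosh η ^ 4) := by
      rw [hυ, hz]; funext η
      have := hcne η
      field_simp
    rw [hfun, integral_const_mul, my_key_integral]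
    ring
end

section
/- Let c > 0, k > 0, p = (√(1 + 48k) − 1)/2, U₀(ξ) = 3c·sech²(√c·ξ/2), and g(ξ) = sech^p(√c·ξ/2). Suppose W : ℝ → ℝ is twice continuously differentiable with W and W' bounded and W(ξ), W'(ξ) → 0 as |ξ| → ∞, and satisfies −W''(ξ) + c·W(ξ) − U₀(ξ)·W(ξ) = g(ξ)² for all ξ ∈ ℝ. Then ∫_ℝ U₀'(ξ)²·W(ξ) dξ = c·∫_ℝ U₀(ξ)·g(ξ)² dξ − (1/2)·∫_ℝ U₀(ξ)²·g(ξ)² dξ. -/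
set_option maxHeartbeats 1000000

open MeasureTheory Filter Set

theorem my_integrable_exp_neg_abs (q : ℝ) (hq : 0 < q) :
    Integrable (fun x : ℝ => Real.exp (-(q * |x|))) := by
  have hIoi : IntegrableOn (fun x : ℝ => Real.exp (-(q * |x|))) (Ioi 0) := by
    refine (exp_neg_integrableOn_Ioi 0 hq).congr_fun (fun x hx => by
      rw [abs_of_pos hx]; ring_nf) measurableSet_Ioi
  have hIio : IntegrableOn (fun x : ℝ => Real.exp (-(q * |x|))) (Iio 0) := by
    have h2 := (MeasurePreserving.integrableOn_comp_preimage
      (Measure.measurePreserving_neg (volume : Measure ℝ))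
      (Homeomorph.neg ℝ).measurableEmbedding).2 hIoi
    have h3 : IntegrableOn (fun x : ℝ => Real.exp (-(q * |x|)))
        ((Homeomorph.neg ℝ) ⁻¹' (Ioi 0)) := by
      refine h2.congr_fun (fun x _ => by simp [abs_neg]) ?_
      exact (Homeomorph.neg ℝ).measurable measurableSet_Ioi
    refine h3.mono_set ?_
    intro x hx
    simpa using hx
  have hIic : IntegrableOn (fun x : ℝ => Real.exp (-(q * |x|))) (Iic 0) := by
    rw [integrableOn_Iic_iff_integrableOn_Iio]; exact hIio
  have h4 := hIic.union hIoi
  rwa [Iic_union_Ioi, integrableOn_univ] at h4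

theorem my_integrable_sech_sq (q : ℝ) (hq : 0 < q) :
    Integrable (fun ξ : ℝ => ((Real.cosh (q * ξ / 2))⁻¹) ^ 2) := by
  have hcont : Continuous fun ξ : ℝ => ((Real.cosh (q * ξ / 2))⁻¹) ^ 2 := by
    refine (Continuous.inv₀ ?_ fun x => (Real.cosh_pos _).ne').pow 2
    exact Real.continuous_cosh.comp ((continuous_const.mul continuous_id).div_const 2)
  refine ((my_integrable_exp_neg_abs q hq).const_mul 4).mono' hcont.aestronglyMeasurable ?_
  refine Filter.Eventually.of_forall fun ξ => ?_
  have h1 : Real.exp (|q * ξ / 2|) / 2 ≤ Real.cosh (q * ξ / 2) := by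
    rw [← Real.cosh_abs, Real.cosh_eq]
    have := Real.exp_pos (-|q * ξ / 2|); linarith
  have h2 : (0:ℝ) < Real.exp (|q * ξ / 2|) / 2 := by positivity
  have h3 : (Real.cosh (q * ξ / 2))⁻¹ ≤ 2 * Real.exp (-(q * |ξ| / 2)) := by
    have hmono := inv_anti₀ h2 h1
    have habs : |q * ξ / 2| = q * |ξ| / 2 := by
      rw [abs_div, abs_mul, abs_of_pos hq]; simp
    rw [habs] at hmono
    calc (Real.cosh (q * ξ / 2))⁻¹ ≤ (Real.exp (q * |ξ| / 2) / 2)⁻¹ := hmono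
      _ = 2 * Real.exp (-(q * |ξ| / 2)) := by
          rw [inv_div, Real.exp_neg, div_eq_mul_inv]
  have h4 : (0:ℝ) < (Real.cosh (q * ξ / 2))⁻¹ := by
    exact inv_pos.mpr (Real.cosh_pos _)
  have h5 : ((Real.cosh (q * ξ / 2))⁻¹) ^ 2 ≤ (2 * Real.exp (-(q * |ξ| / 2))) ^ 2 :=
    pow_le_pow_left₀ h4.le h3 2
  rw [Real.norm_eq_abs, abs_of_pos (pow_pos h4 2)]
  calc ((Real.cosh (q * ξ / 2))⁻¹) ^ 2 ≤ (2 * Real.exp (-(q * |ξ| / 2))) ^ 2 := h5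
    _ = 4 * Real.exp (-(q * |ξ|)) := by
        rw [mul_pow, ← Real.exp_nat_mul]
        norm_num
        ring

/-- Key identity at the first pitchfork bifurcation: if `W = L₁⁻¹g²` (i.e. `W`
is a bounded, decaying solution of `−W'' + cW − U₀W = g²`), then
`∫ (U₀')²W = c∫U₀g² − (1/2)∫U₀²g²`. -/
theorem key_integral_identity (c k : ℝ) (hc : 0 < c) (hk : 0 < k)
    (p : ℝ) (hp : p = (Real.sqrt (1 + 48 * k) - 1) / 2)
    (U₀ g : ℝ → ℝ)
    (hU₀ : U₀ = fun ξ => 3 * c * (1 / Real.cosh (Real.sqrt c * ξ / 2)) ^ 2)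
    (hg : g = fun ξ => (1 / Real.cosh (Real.sqrt c * ξ / 2)) ^ p)
    (W : ℝ → ℝ) (hW : ContDiff ℝ 2 W)
    (hWbdd : ∃ M : ℝ, ∀ ξ : ℝ, |W ξ| ≤ M)
    (hW'bdd : ∃ M : ℝ, ∀ ξ : ℝ, |deriv W ξ| ≤ M)
    (hWlim : Filter.Tendsto W (Filter.cocompact ℝ) (nhds 0))
    (hW'lim : Filter.Tendsto (deriv W) (Filter.cocompact ℝ) (nhds 0))
    (heq : ∀ ξ : ℝ, -deriv (deriv W) ξ + c * W ξ - U₀ ξ * W ξ = g ξ ^ 2) :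
    (∫ ξ : ℝ, (deriv U₀ ξ) ^ 2 * W ξ)
      = c * (∫ ξ : ℝ, U₀ ξ * g ξ ^ 2) - (1 / 2) * (∫ ξ : ℝ, U₀ ξ ^ 2 * g ξ ^ 2) := by
  obtain ⟨M, hM⟩ := hWbdd
  obtain ⟨M', hM'⟩ := hW'bdd
  have hM0 : 0 ≤ M := le_trans (abs_nonneg _) (hM 0)
  have hM'0 : 0 ≤ M' := le_trans (abs_nonneg _) (hM' 0)
  have hp0 : 0 ≤ p := by
    rw [hp]
    have h1 : (1:ℝ) ≤ Real.sqrt (1 + 48 * k) := by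
      nlinarith [Real.sq_sqrt (show (0:ℝ) ≤ 1 + 48 * k by linarith),
        Real.sqrt_nonneg (1 + 48 * k)]
    linarith
  obtain ⟨q, hq, hq2⟩ : ∃ q : ℝ, 0 < q ∧ q ^ 2 = c :=
    ⟨Real.sqrt c, Real.sqrt_pos.mpr hc, Real.sq_sqrt hc.le⟩
  have hsq : Real.sqrt c = q := by rw [← hq2, Real.sqrt_sq hq.le]
  rw [hsq] at hU₀ hg
  subst hq2
  -- basic facts about cosh
  have hchpos : ∀ ξ : ℝ, 0 < Real.cosh (q * ξ / 2) := fun ξ => Real.cosh_pos _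
  have hchne : ∀ ξ : ℝ, Real.cosh (q * ξ / 2) ≠ 0 := fun ξ => (hchpos ξ).ne'
  have hch1 : ∀ ξ : ℝ, 1 ≤ Real.cosh (q * ξ / 2) := fun ξ => Real.one_le_cosh _
  have hshle : ∀ ξ : ℝ, |Real.sinh (q * ξ / 2)| ≤ Real.cosh (q * ξ / 2) := by
    intro ξ
    have e1 := Real.exp_pos (q * ξ / 2)
    have e2 := Real.exp_pos (-(q * ξ / 2))
    rw [Real.sinh_eq, Real.cosh_eq, abs_le]
    constructor <;> [skip; skip] <;> linarith
  have hSpos : ∀ ξ : ℝ, 0 < (Real.cosh (q * ξ / 2))⁻¹ := fun ξ => inv_pos.mpr (hchpos ξ)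
  have hSle1 : ∀ ξ : ℝ, (Real.cosh (q * ξ / 2))⁻¹ ≤ 1 := fun ξ =>
    inv_le_one_of_one_le₀ (hch1 ξ)
  -- derivatives of the soliton
  have hu : ∀ ξ : ℝ, HasDerivAt (fun x : ℝ => q * x / 2) (q / 2) ξ := fun ξ => by
    simpa using ((hasDerivAt_id ξ).const_mul q).div_const 2
  have hch : ∀ ξ : ℝ, HasDerivAt (fun x : ℝ => Real.cosh (q * x / 2))
      (Real.sinh (q * ξ / 2) * (q / 2)) ξ := fun ξ =>
    (Real.hasDerivAt_cosh _).comp ξ (hu ξ)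
  have hsh : ∀ ξ : ℝ, HasDerivAt (fun x : ℝ => Real.sinh (q * x / 2))
      (Real.cosh (q * ξ / 2) * (q / 2)) ξ := fun ξ =>
    (Real.hasDerivAt_sinh _).comp ξ (hu ξ)
  obtain ⟨D1, hD1_def⟩ : ∃ D1 : ℝ → ℝ, D1 = fun ξ =>
      -(3 * q ^ 2 * q) * (Real.sinh (q * ξ / 2) / Real.cosh (q * ξ / 2) ^ 3) := ⟨_, rfl⟩
  obtain ⟨V, hV_def⟩ : ∃ V : ℝ → ℝ, V = fun ξ => q ^ 2 * U₀ ξ - U₀ ξ ^ 2 / 2 := ⟨_, rfl⟩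
  obtain ⟨Vd, hVd_def⟩ : ∃ Vd : ℝ → ℝ, Vd = fun ξ => (q ^ 2 - U₀ ξ) * D1 ξ := ⟨_, rfl⟩
  have hU0d : ∀ ξ : ℝ, HasDerivAt U₀ (D1 ξ) ξ := by
    intro ξ
    rw [hU₀, hD1_def]
    have h2 : HasDerivAt (fun x : ℝ => (Real.cosh (q * x / 2))⁻¹)
        (-(Real.sinh (q * ξ / 2) * (q / 2)) / Real.cosh (q * ξ / 2) ^ 2) ξ :=
      (hch ξ).inv (hchne ξ)
    have h3 := (h2.pow 2).const_mul (3 * q ^ 2)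
    have hne := hchne ξ
    simp only [one_div]
    refine HasDerivAt.congr_deriv h3 ?_
    norm_num
    field_simp
  have hD1d : ∀ ξ : ℝ, HasDerivAt D1 (V ξ) ξ := by
    intro ξ
    rw [hD1_def, hV_def, hU₀]
    have hne := hchne ξ
    have h4 := ((hsh ξ).div ((hch ξ).pow 3) (pow_ne_zero 3 hne)).const_mul (-(3 * q ^ 2 * q))
    refine HasDerivAt.congr_deriv h4 ?_
    have hs2 : Real.sinh (q * ξ / 2) ^ 2 = Real.cosh (q * ξ / 2) ^ 2 - 1 := by
      have := Real.cosh_sq_sub_sinh_sq (q * ξ / 2); linarith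
    simp only [Pi.pow_apply]
    norm_num
    field_simp
    linear_combination 3 * hs2
  have hderiv_eq : deriv U₀ = D1 := funext fun ξ => (hU0d ξ).deriv
  -- derivatives of V, Vd
  have hVd' : ∀ ξ : ℝ, HasDerivAt V (Vd ξ) ξ := by
    intro ξ
    rw [hV_def, hVd_def]
    have h := ((hU0d ξ).const_mul (q ^ 2)).sub (((hU0d ξ).pow 2).div_const 2)
    refine HasDerivAt.congr_deriv h ?_
    ring
  have hVdd' : ∀ ξ : ℝ, HasDerivAt Vd (-D1 ξ * D1 ξ + (q ^ 2 - U₀ ξ) * V ξ) ξ := by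
    intro ξ
    rw [hVd_def]
    have h := ((hasDerivAt_const ξ (q ^ 2)).sub (hU0d ξ)).mul (hD1d ξ)
    refine HasDerivAt.congr_deriv h ?_
    simp only [Pi.sub_apply]
    ring
  -- derivatives of W
  have hWd : ∀ ξ : ℝ, HasDerivAt W (deriv W ξ) ξ := fun ξ =>
    ((hW.differentiable (by norm_num)) ξ).hasDerivAt
  have hW1 : ContDiff ℝ 1 (deriv W) := by
    have h := (contDiff_succ_iff_deriv (n := 1)).mp (by exact_mod_cast hW)
    exact h.2.2
  have hWdd : ∀ ξ : ℝ, HasDerivAt (deriv W) (deriv (deriv W) ξ) ξ := fun ξ =>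
    ((hW1.differentiable one_ne_zero) ξ).hasDerivAt
  have hWcont : Continuous W := hW.continuous
  have hW'cont : Continuous (deriv W) := hW1.continuous
  -- the flux function F and its derivative
  obtain ⟨F, hF_def⟩ : ∃ F : ℝ → ℝ, F = fun ξ => V ξ * deriv W ξ - Vd ξ * W ξ := ⟨_, rfl⟩
  have hF : ∀ ξ : ℝ, HasDerivAt F (D1 ξ ^ 2 * W ξ - V ξ * g ξ ^ 2) ξ := by
    intro ξ
    rw [hF_def]
    have h := ((hVd' ξ).mul (hWdd ξ)).sub ((hVdd' ξ).mul (hWd ξ))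
    refine HasDerivAt.congr_deriv h ?_
    have h2 : deriv (deriv W) ξ = q ^ 2 * W ξ - U₀ ξ * W ξ - g ξ ^ 2 := by
      have := heq ξ; linarith
    rw [h2, hVd_def]
    simp only
    ring
  -- continuity facts
  have hchcont : Continuous fun ξ : ℝ => Real.cosh (q * ξ / 2) :=
    Real.continuous_cosh.comp ((continuous_const.mul continuous_id).div_const 2)
  have hScont : Continuous fun ξ : ℝ => (Real.cosh (q * ξ / 2))⁻¹ :=
    hchcont.inv₀ hchne
  have hU0cont : Continuous U₀ := by
    rw [hU₀]; simp only [one_div]; exact continuous_const.mul (hScont.pow 2)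
  have hD1cont : Continuous D1 := by
    rw [hD1_def]
    exact continuous_const.mul ((Real.continuous_sinh.comp ((continuous_const.mul continuous_id).div_const 2)).div
      (hchcont.pow 3) (fun ξ => pow_ne_zero 3 (hchne ξ)))
  have hVcont : Continuous V := by
    rw [hV_def]; exact (continuous_const.mul hU0cont).sub ((hU0cont.pow 2).div_const 2)
  have hVdcont : Continuous Vd := by
    rw [hVd_def]; exact (continuous_const.sub hU0cont).mul hD1cont
  have hgcont : Continuous g := by
    rw [hg]; simp only [one_div]
    exact hScont.rpow_const fun x => Or.inr hp0
  -- bounds on g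
  have hg0 : ∀ ξ : ℝ, 0 ≤ g ξ := by
    intro ξ; rw [hg]; exact Real.rpow_nonneg (by positivity) p
  have hg1 : ∀ ξ : ℝ, g ξ ≤ 1 := by
    intro ξ; rw [hg]
    refine Real.rpow_le_one (by positivity) ?_ hp0
    rw [div_le_one (hchpos ξ)]; exact hch1 ξ
  have hgsq : ∀ ξ : ℝ, g ξ ^ 2 ≤ 1 := by
    intro ξ; nlinarith [hg0 ξ, hg1 ξ]
  -- pointwise bounds
  have hU0eq : ∀ ξ : ℝ, U₀ ξ = 3 * q ^ 2 * ((Real.cosh (q * ξ / 2))⁻¹) ^ 2 := by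
    intro ξ; rw [hU₀]; simp [one_div]
  have hD1abs : ∀ ξ : ℝ, |D1 ξ| ≤ 3 * q ^ 3 * (Real.cosh (q * ξ / 2))⁻¹ := by
    intro ξ
    rw [hD1_def]
    simp only
    rw [abs_mul, abs_neg, abs_of_pos (by positivity : (0:ℝ) < 3 * q ^ 2 * q), abs_div,
      abs_of_pos (pow_pos (hchpos ξ) 3)]
    have h1 : |Real.sinh (q * ξ / 2)| / Real.cosh (q * ξ / 2) ^ 3
        ≤ (Real.cosh (q * ξ / 2))⁻¹ := by
      rw [div_le_iff₀ (pow_pos (hchpos ξ) 3)]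
      have h2 : (Real.cosh (q * ξ / 2))⁻¹ * Real.cosh (q * ξ / 2) ^ 3
          = Real.cosh (q * ξ / 2) ^ 2 := by
        field_simp
      rw [h2]
      calc |Real.sinh (q * ξ / 2)| ≤ Real.cosh (q * ξ / 2) := hshle ξ
        _ ≤ Real.cosh (q * ξ / 2) ^ 2 := by nlinarith [hch1 ξ]
    calc 3 * q ^ 2 * q * (|Real.sinh (q * ξ / 2)| / Real.cosh (q * ξ / 2) ^ 3)
        ≤ 3 * q ^ 2 * q * (Real.cosh (q * ξ / 2))⁻¹ := by
          exact mul_le_mul_of_nonneg_left h1 (by positivity)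
      _ = 3 * q ^ 3 * (Real.cosh (q * ξ / 2))⁻¹ := by ring
  -- integrability
  have hsech2 : Integrable (fun ξ : ℝ => ((Real.cosh (q * ξ / 2))⁻¹) ^ 2) :=
    my_integrable_sech_sq q hq
  have hf1 : Integrable (fun ξ : ℝ => D1 ξ ^ 2 * W ξ) := by
    refine (hsech2.const_mul (9 * q ^ 6 * M)).mono'
      (((hD1cont.pow 2).mul hWcont).aestronglyMeasurable) (Eventually.of_forall fun ξ => ?_)
    rw [Real.norm_eq_abs, abs_mul, abs_of_nonneg (sq_nonneg (D1 ξ))]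
    have h1 := hD1abs ξ
    have h2 := hSpos ξ
    have h3 := hM ξ
    have h4 : D1 ξ ^ 2 ≤ 9 * q ^ 6 * ((Real.cosh (q * ξ / 2))⁻¹) ^ 2 := by
        nlinarith [abs_nonneg (D1 ξ), sq_abs (D1 ξ)]
    nlinarith [h4, h3, abs_nonneg (W ξ), sq_nonneg (D1 ξ), hM0, sq_nonneg ((Real.cosh (q * ξ / 2))⁻¹)]
  have hf3 : Integrable (fun ξ : ℝ => U₀ ξ * g ξ ^ 2) := by
    refine (hsech2.const_mul (3 * q ^ 2)).mono'
      ((hU0cont.mul (hgcont.pow 2)).aestronglyMeasurable) (Eventually.of_forall fun ξ => ?_)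
    rw [Real.norm_eq_abs, abs_mul]
    have h1 := hU0eq ξ
    have h2 := hSpos ξ
    have h3 := hgsq ξ
    have h4 := hg0 ξ
    rw [abs_of_nonneg (by rw [h1]; positivity), abs_of_nonneg (by positivity : (0:ℝ) ≤ g ξ ^ 2)]
    rw [h1]
    have h5 : 3 * q ^ 2 * ((Real.cosh (q * ξ / 2))⁻¹) ^ 2 * g ξ ^ 2
        ≤ 3 * q ^ 2 * ((Real.cosh (q * ξ / 2))⁻¹) ^ 2 * 1 :=
      mul_le_mul_of_nonneg_left h3 (by positivity)
    linarith
  have hf4 : Integrable (fun ξ : ℝ => U₀ ξ ^ 2 * g ξ ^ 2) := by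
    refine (hsech2.const_mul (9 * q ^ 4)).mono'
      (((hU0cont.pow 2).mul (hgcont.pow 2)).aestronglyMeasurable)
      (Eventually.of_forall fun ξ => ?_)
    rw [Real.norm_eq_abs, abs_mul]
    have h1 := hU0eq ξ
    have h2 := hSpos ξ
    have h2b := hSle1 ξ
    have h3 := hgsq ξ
    have h4 := hg0 ξ
    rw [abs_of_nonneg (sq_nonneg (U₀ ξ)), abs_of_nonneg (sq_nonneg (g ξ))]
    rw [h1]
    have h5 : ((Real.cosh (q * ξ / 2))⁻¹) ^ 2 ≤ 1 := by nlinarith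
    have h6 : ((Real.cosh (q * ξ / 2))⁻¹) ^ 2 * ((Real.cosh (q * ξ / 2))⁻¹) ^ 2 * g ξ ^ 2
        ≤ ((Real.cosh (q * ξ / 2))⁻¹) ^ 2 := by
      nlinarith [sq_nonneg (g ξ), sq_nonneg ((Real.cosh (q * ξ / 2))⁻¹),
        mul_nonneg (sq_nonneg ((Real.cosh (q * ξ / 2))⁻¹)) (sq_nonneg (g ξ))]
    have h7 := mul_le_mul_of_nonneg_left h6 (show (0:ℝ) ≤ 9 * q ^ 4 by positivity)
    nlinarith [h7]
  have hf2 : Integrable (fun ξ : ℝ => V ξ * g ξ ^ 2) := by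
    have : (fun ξ : ℝ => V ξ * g ξ ^ 2)
        = fun ξ => q ^ 2 * (U₀ ξ * g ξ ^ 2) - (1 / 2) * (U₀ ξ ^ 2 * g ξ ^ 2) := by
      funext ξ; rw [hV_def]; simp only; ring
    rw [this]
    exact (hf3.const_mul _).sub (hf4.const_mul _)
  have hsum : Integrable (fun ξ : ℝ => D1 ξ ^ 2 * W ξ - V ξ * g ξ ^ 2) := hf1.sub hf2
  -- limits at infinity
  have hcosh_cc : Tendsto (fun ξ : ℝ => Real.cosh (q * ξ / 2)) (cocompact ℝ) atTop := by
    have hexp : Tendsto (fun ξ : ℝ => Real.exp (q * ‖ξ‖ / 2) / 2) (cocompact ℝ) atTop :=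
      (Real.tendsto_exp_atTop.comp
        ((tendsto_norm_cocompact_atTop.const_mul_atTop hq).atTop_div_const
          two_pos)).atTop_div_const two_pos
    refine tendsto_atTop_mono (fun ξ => ?_) hexp
    have h1 : Real.exp (|q * ξ / 2|) / 2 ≤ Real.cosh (q * ξ / 2) := by
      rw [← Real.cosh_abs, Real.cosh_eq]
      have := Real.exp_pos (-|q * ξ / 2|); linarith
    have habs : |q * ξ / 2| = q * ‖ξ‖ / 2 := by
      rw [Real.norm_eq_abs, abs_div, abs_mul, abs_of_pos hq]; simp
    rw [← habs]
    exact h1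
  have hS_cc : Tendsto (fun ξ : ℝ => (Real.cosh (q * ξ / 2))⁻¹) (cocompact ℝ) (nhds 0) :=
    hcosh_cc.inv_tendsto_atTop
  have hU0_cc : Tendsto U₀ (cocompact ℝ) (nhds 0) := by
    rw [hU₀]; simp only [one_div]
    have := (hS_cc.pow 2).const_mul (3 * q ^ 2)
    simpa using this
  have hD1_cc : Tendsto D1 (cocompact ℝ) (nhds 0) := by
    refine squeeze_zero_norm (fun ξ => ?_) (by simpa using hS_cc.const_mul (3 * q ^ 3))
    rw [Real.norm_eq_abs]
    exact hD1abs ξ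
  have hV_cc : Tendsto V (cocompact ℝ) (nhds 0) := by
    rw [hV_def]
    have := (hU0_cc.const_mul (q ^ 2)).sub ((hU0_cc.pow 2).div_const 2)
    simpa using this
  have hVd_cc : Tendsto Vd (cocompact ℝ) (nhds 0) := by
    rw [hVd_def]
    have := ((tendsto_const_nhds (x := (q ^ 2 : ℝ))).sub hU0_cc).mul hD1_cc
    simpa using this
  have hF_cc : Tendsto F (cocompact ℝ) (nhds 0) := by
    refine squeeze_zero_norm (fun ξ => ?_)
      (a := fun ξ => |V ξ| * M' + |Vd ξ| * M) ?_
    · rw [hF_def, Real.norm_eq_abs]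
      simp only
      calc |V ξ * deriv W ξ - Vd ξ * W ξ| ≤ |V ξ * deriv W ξ| + |Vd ξ * W ξ| := abs_sub _ _
        _ ≤ |V ξ| * M' + |Vd ξ| * M := by
            rw [abs_mul, abs_mul]
            exact add_le_add (mul_le_mul_of_nonneg_left (hM' ξ) (abs_nonneg _))
              (mul_le_mul_of_nonneg_left (hM ξ) (abs_nonneg _))
    · have := (hV_cc.abs.mul_const M').add (hVd_cc.abs.mul_const M)
      simpa using this
  have hFtop : Tendsto F atTop (nhds 0) := hF_cc.mono_left atTop_le_cocompact
  have hFbot : Tendsto F atBot (nhds 0) := hF_cc.mono_left atBot_le_cocompact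
  -- FTC on both half lines
  have hIic := integral_Iic_of_hasDerivAt_of_tendsto' (a := 0)
    (f' := fun ξ => D1 ξ ^ 2 * W ξ - V ξ * g ξ ^ 2)
    (fun x _ => hF x) hsum.integrableOn hFbot
  have hIoi := integral_Ioi_of_hasDerivAt_of_tendsto' (a := 0)
    (f' := fun ξ => D1 ξ ^ 2 * W ξ - V ξ * g ξ ^ 2)
    (fun x _ => hF x) hsum.integrableOn hFtop
  have hzero : (∫ ξ : ℝ, (D1 ξ ^ 2 * W ξ - V ξ * g ξ ^ 2)) = 0 := by
    rw [← intervalIntegral.integral_Iic_add_Ioi (b := 0) hsum.integrableOn hsum.integrableOn, hIic, hIoi]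
    ring
  have hmain : (∫ ξ : ℝ, D1 ξ ^ 2 * W ξ) = ∫ ξ : ℝ, V ξ * g ξ ^ 2 := by
    have h := integral_sub hf1 hf2
    rw [hzero] at h
    linarith
  -- final assembly
  rw [hderiv_eq, hmain]
  have hVg : (fun ξ : ℝ => V ξ * g ξ ^ 2)
      = fun ξ => q ^ 2 * (U₀ ξ * g ξ ^ 2) - (1 / 2) * (U₀ ξ ^ 2 * g ξ ^ 2) := by
    funext ξ; rw [hV_def]; simp only; ring
  rw [hVg, integral_sub (hf3.const_mul _) (hf4.const_mul _),
    integral_const_mul, integral_const_mul]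
end
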